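/- arXiv:2004.05423 — 4 statements merged into one kernel-verified Lean document; each statement's English description precedes it below -/
import Mathlib

section
/- Let h(t) = ∑_{i=0}^s h_it^i be a real polynomial of degree s ≤ d, let (p,q) be its symmetric decomposition with respect to d, let ℓ = d+1-s, and let r ≥ ℓ be an integer. Then there are uniquely determined real polynomials v_r(t) = ∑_{i=0}^{d} v_{r,i}t^i and w_r(t) = ∑_{i=0}^{r+s-ℓ-1} w_{r,i}t^i satisfying v_{r,i} = v_{r,d-i} for all 0 ≤ i ≤ d and w_{r,i} = w_{r,r+s-ℓ-1-i} for all 0 ≤ i ≤ r+s-ℓ-1, such that (1+t+⋯+t^{r-1})h(t) = v_r(t) + t^ℓ w_r(t). Moreover, with the convention h_i := 0 for i ∉ {0,1,…,s}, their coefficients are given by v_{r,i} = h_0 + ⋯ + h_i − h_d − ⋯ − h_{d-i+1} and w_{r,i} = −h_{ℓ−r} − h_{ℓ+1−r} − ⋯ − h_{ℓ+i−r} + h_s + h_{s-1} + ⋯ + h_{s-i}, and v_r(t) = p(t) for all r ≥ ℓ. -/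
open Polynomial

/-- The geometric polynomial `1 + t + ⋯ + t^{r-1}`. -/
noncomputable def geomPoly (r : ℕ) : ℝ[X] := ∑ j ∈ Finset.range r, X ^ j

/-- `sect r i f` is the polynomial `f^{⟨r,i⟩}` whose `n`-th coefficient is the `(r*n+i)`-th
coefficient of `f` (valid definition for `r ≥ 1`). -/
noncomputable def sect (r i : ℕ) (f : ℝ[X]) : ℝ[X] :=
  ∑ n ∈ Finset.range (f.natDegree + 1), C (f.coeff (r * n + i)) * X ^ n

/-- The operator `U_r^D h = (h·(1+t+⋯+t^{r-1})^D)^{⟨r,0⟩}`. -/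
noncomputable def Uop (r D : ℕ) (h : ℝ[X]) : ℝ[X] := sect r 0 (h * geomPoly r ^ D)

/-- `(p, q)` is the symmetric decomposition of `h` with respect to `d`. -/
def IsSymmDecomp (d : ℕ) (h p q : ℝ[X]) : Prop :=
  h = p + X * q ∧
  p.natDegree ≤ d ∧ (∀ i ≤ d, p.coeff i = p.coeff (d - i)) ∧
  q.natDegree ≤ d - 1 ∧ (∀ i ≤ d - 1, q.coeff i = q.coeff (d - 1 - i))

/-- A real polynomial is real-rooted if it is zero or all of its complex roots are real. -/
def RealRooted (f : ℝ[X]) : Prop :=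
  f = 0 ∨ ∀ z : ℂ, aeval z f = 0 → z.im = 0

/-- The real roots of `f`, with multiplicity, in weakly decreasing order. -/
noncomputable def descRoots (f : ℝ[X]) : List ℝ := (f.roots.sort (· ≤ ·)).reverse

/-- `Interlaces f g` means `f ⪯ g`: both are real-rooted and, unless one of them is zero,
the decreasingly ordered root lists `s` of `f` and `t` of `g` satisfy
`⋯ ≤ s_2 ≤ t_2 ≤ s_1 ≤ t_1` (with `deg g = deg f` or `deg f + 1`). -/
def Interlaces (f g : ℝ[X]) : Prop :=
  RealRooted f ∧ RealRooted g ∧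
  (f = 0 ∨ g = 0 ∨
    (((descRoots g).length = (descRoots f).length ∨
      (descRoots g).length = (descRoots f).length + 1) ∧
     (∀ i, (hf : i < (descRoots f).length) → (hg : i < (descRoots g).length) →
        (descRoots f).get ⟨i, hf⟩ ≤ (descRoots g).get ⟨i, hg⟩) ∧
     (∀ i, (hg : i + 1 < (descRoots g).length) → (hf : i < (descRoots f).length) →
        (descRoots g).get ⟨i + 1, hg⟩ ≤ (descRoots f).get ⟨i, hf⟩)))

/-- The coefficient of `h` at an integer index, zero for negative indices. -/
noncomputable def coeffZ (h : ℝ[X]) (j : ℤ) : ℝ := if 0 ≤ j then h.coeff j.toNat else 0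

/-- Property (H): `h_0 + ⋯ + h_i ≥ h_d + h_{d-1} + ⋯ + h_{d-i+1}` for all `i`. -/
def PropH (d : ℕ) (h : ℝ[X]) : Prop :=
  ∀ i : ℕ, ∑ j ∈ Finset.range i, coeffZ h ((d : ℤ) - j) ≤ ∑ j ∈ Finset.range (i + 1), h.coeff j

/-- Property (S): `h_0 + ⋯ + h_i ≤ h_s + h_{s-1} + ⋯ + h_{s-i}` for all `i`. -/
def PropS (s : ℕ) (h : ℝ[X]) : Prop :=
  ∀ i : ℕ, ∑ j ∈ Finset.range (i + 1), h.coeff j ≤ ∑ j ∈ Finset.range (i + 1), coeffZ h ((s : ℤ) - j)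

noncomputable def HZ (h : ℝ[X]) (k : ℤ) : ℝ := ∑ j ∈ Finset.range (k+1).toNat, h.coeff j

lemma HZ_neg (h : ℝ[X]) {k : ℤ} (hk : k < 0) : HZ h k = 0 := by
  have : (k+1).toNat = 0 := by omega
  simp [HZ, this]

lemma coeffZ_nat (h : ℝ[X]) (i : ℕ) : coeffZ h (i : ℤ) = h.coeff i := by
  simp [coeffZ]

lemma HZ_succ (h : ℝ[X]) (k : ℤ) : HZ h k = HZ h (k-1) + coeffZ h k := by
  rcases lt_or_ge k 0 with hk | hk
  · rw [HZ_neg h hk, HZ_neg h (by omega), coeffZ]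
    simp [not_le.mpr hk]
  · have h1 : (k+1).toNat = k.toNat + 1 := by omega
    have h2 : (k-1+1).toNat = k.toNat := by omega
    rw [HZ, HZ, h1, h2, Finset.sum_range_succ, coeffZ, if_pos hk]

lemma HZ_stab (h : ℝ[X]) {a b : ℤ} (ha : (h.natDegree : ℤ) ≤ a) (hab : a ≤ b) :
    HZ h a = HZ h b := by
  rw [HZ, HZ]
  apply Finset.sum_subset
  · intro x hx; simp only [Finset.mem_range] at *; omega
  · intro x hx hx'
    simp only [Finset.mem_range, not_lt] at *
    exact coeff_eq_zero_of_natDegree_lt (by omega)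

lemma sum_coeffZ (h : ℝ[X]) (a : ℤ) (n : ℕ) :
    ∑ j ∈ Finset.range n, coeffZ h (a + j) = HZ h (a + n - 1) - HZ h (a - 1) := by
  induction n with
  | zero => simp
  | succ n ih =>
    rw [Finset.sum_range_succ, ih]
    have := HZ_succ h (a + n)
    push_cast
    have e : a + (n+1) - 1 = a + n := by ring
    rw [e, this]
    ring_nf

lemma sum_coeffZ' (h : ℝ[X]) (b : ℤ) (n : ℕ) :
    ∑ j ∈ Finset.range n, coeffZ h (b - j) = HZ h b - HZ h (b - n) := by
  rw [← Finset.sum_range_reflect]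
  have : ∀ j ∈ Finset.range n, coeffZ h (b - ↑(n - 1 - j)) = coeffZ h ((b - n + 1) + j) := by
    intro j hj
    simp only [Finset.mem_range] at hj
    congr 1
    omega
  rw [Finset.sum_congr rfl this, sum_coeffZ]
  congr 1 <;> [skip; congr 1] <;> ring_nf

lemma coeff_mk (f : ℕ → ℝ) (n : ℕ) (k : ℕ) :
    (∑ i ∈ Finset.range n, C (f i) * X ^ i).coeff k = if k < n then f k else 0 := by
  rw [finset_sum_coeff]
  simp only [coeff_C_mul, coeff_X_pow, mul_ite, mul_one, mul_zero]
  rw [Finset.sum_ite_eq (Finset.range n) k f]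
  simp [Finset.mem_range]

lemma coeff_zero_of (d ℓ r : ℕ) (h1 : 1 ≤ ℓ) (hlr : ℓ ≤ r) (u : ℝ[X])
    (hud : u.natDegree ≤ d)
    (husym : ∀ i ≤ d, u.coeff i = u.coeff (d - i))
    (hz0 : ∀ i < ℓ, u.coeff i = 0)
    (hB : ∀ j, ℓ ≤ j → j + ℓ ≤ d + r → u.coeff j = u.coeff (d + r - j)) :
    u = 0 := by
  ext j
  rw [coeff_zero]
  induction j using Nat.strong_induction_on with
  | _ j ih =>
    rcases lt_or_ge j ℓ with hj | hj
    · exact hz0 j hj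
    rcases lt_or_ge d (j + ℓ) with hj2 | hj2
    · rcases le_or_gt j d with hjd | hjd
      · rw [husym j hjd]; exact hz0 _ (by omega)
      · exact coeff_eq_zero_of_natDegree_lt (by omega)
    · rw [hB j hj (by omega)]
      rcases lt_or_ge j r with hjr | hjr
      · exact coeff_eq_zero_of_natDegree_lt (by omega)
      · rw [husym (d + r - j) (by omega)]
        have e : d - (d + r - j) = j - r := by omega
        rw [e]
        exact ih (j - r) (by omega)

lemma geom_mul_coeff (h : ℝ[X]) (r : ℕ) (k : ℕ) :
    (geomPoly r * h).coeff k = HZ h k - HZ h ((k : ℤ) - r) := by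
  rw [geomPoly, Finset.sum_mul, finset_sum_coeff]
  have step : ∀ j ∈ Finset.range r, (X ^ j * h).coeff k = coeffZ h ((k : ℤ) - j) := by
    intro j _
    rcases le_or_gt j k with hjk | hjk
    · have : k = (k - j) + j := by omega
      rw [this, coeff_X_pow_mul, coeffZ, if_pos (by omega)]
      congr 1
      omega
    · rw [X_pow_mul, coeff_mul_X_pow', if_neg (by omega), coeffZ, if_neg (by omega)]
  rw [Finset.sum_congr rfl step, sum_coeffZ' h k r]

noncomputable def Pmk (h : ℝ[X]) (d : ℕ) : ℝ[X] :=
  ∑ i ∈ Finset.range (d+1), C (HZ h i + HZ h ((d:ℤ)-i) - HZ h d) * X ^ i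

noncomputable def Qmk (h : ℝ[X]) (d : ℕ) : ℝ[X] :=
  ∑ k ∈ Finset.range d, C (HZ h d - HZ h ((d:ℤ)-k-1) - HZ h k) * X ^ k

lemma natDegree_mk (f : ℕ → ℝ) (n : ℕ) :
    (∑ i ∈ Finset.range n, C (f i) * X ^ i).natDegree ≤ n - 1 := by
  rw [natDegree_le_iff_coeff_eq_zero]
  intro m hm
  rw [coeff_mk, if_neg (by omega)]

lemma hP_eq (h : ℝ[X]) (d : ℕ) (hd : h.natDegree ≤ d) :
    h = Pmk h d + X * Qmk h d := by
  ext k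
  rw [coeff_add, Pmk, Qmk, coeff_mk]
  rcases Nat.eq_zero_or_pos k with hk | hk
  · subst hk
    simp only [coeff_X_mul_zero, if_pos (by omega : 0 < d + 1), Nat.cast_zero, sub_zero,
      add_zero]
    have h0 : HZ h 0 = h.coeff 0 := by simp [HZ]
    rw [h0]; ring
  · obtain ⟨k, rfl⟩ : ∃ m, k = m + 1 := ⟨k - 1, by omega⟩
    rw [coeff_X_mul, coeff_mk]
    rcases le_or_gt (k+1) d with hkd | hkd
    · rw [if_pos (by omega), if_pos (by omega)]
      have hs : HZ h ((k+1:ℕ):ℤ) = HZ h (k:ℤ) + h.coeff (k+1) := by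
        have e2 : ((k+1:ℕ):ℤ) = (k:ℤ)+1 := by push_cast; ring
        rw [e2, HZ_succ h ((k:ℤ)+1)]
        have e1 : ((k:ℤ)+1-1) = (k:ℤ) := by ring
        have e4 : ((k:ℤ)+1).toNat = k+1 := by omega
        rw [e1, coeffZ, if_pos (by omega), e4]
      have e6 : HZ h ((d:ℤ) - ((k+1:ℕ):ℤ)) = HZ h ((d:ℤ) - k - 1) := by
        congr 1; push_cast; ring
      rw [hs, e6]; ring
    · rw [if_neg (by omega), if_neg (by omega)]
      rw [coeff_eq_zero_of_natDegree_lt (by omega)]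
      norm_num

lemma Pmk_symm (h : ℝ[X]) (d : ℕ) : ∀ i ≤ d, (Pmk h d).coeff i = (Pmk h d).coeff (d - i) := by
  intro i hi
  rw [Pmk, coeff_mk, coeff_mk, if_pos (by omega), if_pos (by omega)]
  have e1 : ((d - i : ℕ) : ℤ) = (d:ℤ) - i := by omega
  have e2 : (d:ℤ) - ((d:ℤ) - i) = (i:ℤ) := by ring
  rw [e1, e2]; ring

lemma Qmk_symm (h : ℝ[X]) (d : ℕ) :
    ∀ k ≤ d - 1, (Qmk h d).coeff k = (Qmk h d).coeff (d - 1 - k) := by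
  intro k hk
  rcases Nat.eq_zero_or_pos d with hd | hd
  · subst hd; simp at hk; subst hk; rfl
  rw [Qmk, coeff_mk, coeff_mk, if_pos (by omega), if_pos (by omega)]
  have e1 : ((d - 1 - k : ℕ) : ℤ) = (d:ℤ) - 1 - k := by omega
  have e2 : (d:ℤ) - ((d:ℤ) - 1 - k) - 1 = (k:ℤ) := by ring
  rw [e1, e2]; ring

lemma pcoeff_eq (d : ℕ) (h p q : ℝ[X]) (hd : h.natDegree ≤ d)
    (hpq : IsSymmDecomp d h p q) :
    ∀ i ≤ d, p.coeff i = HZ h i + HZ h ((d:ℤ)-i) - HZ h d := by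
  obtain ⟨heq, hpd, hps, hqd, hqs⟩ := hpq
  have hmain : Pmk h d - p = 0 := by
    have huz : Pmk h d - p = X * (q - Qmk h d) := by
      have h1 := hP_eq h d hd
      linear_combination heq - h1
    apply coeff_zero_of d 1 1 le_rfl le_rfl
    · calc (Pmk h d - p).natDegree ≤ max (Pmk h d).natDegree p.natDegree :=
            natDegree_sub_le _ _
        _ ≤ d := by
            apply max_le _ hpd
            have := natDegree_mk (fun i => HZ h i + HZ h ((d:ℤ)-i) - HZ h d) (d+1)
            rw [Pmk]; omega
    · intro i hi
      rw [coeff_sub, coeff_sub, Pmk_symm h d i hi, hps i hi]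
    · intro i hi
      interval_cases i
      rw [huz, coeff_X_mul_zero]
    · intro j hj1 hj2
      have hc : X * (q - Qmk h d) = (q - Qmk h d) * X ^ 1 := by ring
      rw [huz, hc, coeff_mul_X_pow', coeff_mul_X_pow', if_pos (by omega), if_pos (by omega)]
      have e : d + 1 - j - 1 = d - 1 - (j - 1) := by omega
      rw [coeff_sub, coeff_sub, hqs (j-1) (by omega), Qmk_symm h d (j-1) (by omega), e]
  intro i hi
  have : p.coeff i = (Pmk h d).coeff i := by
    have := congrArg (fun f => f.coeff i) hmain
    simp only [coeff_sub, coeff_zero] at this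
    linarith
  rw [this, Pmk, coeff_mk, if_pos (by omega)]

lemma HZ_stab' (h : ℝ[X]) {a b : ℤ} (ha : (h.natDegree : ℤ) ≤ a) (hb : (h.natDegree : ℤ) ≤ b) :
    HZ h a = HZ h b := by
  rcases le_total a b with hab | hab
  · exact HZ_stab h ha hab
  · exact (HZ_stab h hb hab).symm

noncomputable def Wmk (h : ℝ[X]) (d s ℓ r : ℕ) : ℝ[X] :=
  ∑ i ∈ Finset.range (r+s+1), C (HZ h d - HZ h ((s:ℤ)-1-i) - HZ h ((ℓ:ℤ)+i-r)) * X ^ i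

lemma Wmk_coeff (h : ℝ[X]) (d s ℓ r : ℕ) (hdeg : h.natDegree = s)
    (hls : ℓ + s = d + 1) (hsd : s ≤ d) (hr : ℓ ≤ r) (i : ℕ) :
    (Wmk h d s ℓ r).coeff i = HZ h d - HZ h ((s:ℤ)-1-i) - HZ h ((ℓ:ℤ)+i-r) := by
  rw [Wmk, coeff_mk]
  split_ifs with hi
  · rfl
  · have h1 : HZ h ((s:ℤ)-1-i) = 0 := HZ_neg h (by omega)
    have h2 : HZ h ((ℓ:ℤ)+i-r) = HZ h d := HZ_stab' h (by omega) (by omega)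
    rw [h1, h2]; ring

lemma Wmk_zero (h : ℝ[X]) (d s ℓ r : ℕ) (hdeg : h.natDegree = s)
    (hls : ℓ + s = d + 1) (hsd : s ≤ d) (hr : ℓ ≤ r) (i : ℕ) (hi : r + s ≤ i + ℓ) :
    (Wmk h d s ℓ r).coeff i = 0 := by
  rw [Wmk_coeff h d s ℓ r hdeg hls hsd hr i]
  have h1 : HZ h ((s:ℤ)-1-i) = 0 := HZ_neg h (by omega)
  have h2 : HZ h ((ℓ:ℤ)+i-r) = HZ h d := HZ_stab' h (by omega) (by omega)
  rw [h1, h2]; ring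

lemma Wmk_natDegree (h : ℝ[X]) (d s ℓ r : ℕ) (hdeg : h.natDegree = s)
    (hls : ℓ + s = d + 1) (hsd : s ≤ d) (hr : ℓ ≤ r) :
    (Wmk h d s ℓ r).natDegree ≤ r + s - ℓ - 1 := by
  rw [natDegree_le_iff_coeff_eq_zero]
  intro m hm
  exact Wmk_zero h d s ℓ r hdeg hls hsd hr m (by omega)

lemma Wmk_symm (h : ℝ[X]) (d s ℓ r : ℕ) (hdeg : h.natDegree = s)
    (hls : ℓ + s = d + 1) (hsd : s ≤ d) (hr : ℓ ≤ r) :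
    ∀ i ≤ r + s - ℓ - 1,
      (Wmk h d s ℓ r).coeff i = (Wmk h d s ℓ r).coeff (r + s - ℓ - 1 - i) := by
  intro i hi
  rcases le_or_gt (r + s) ℓ with hde | hde
  · have hrs : r = ℓ ∧ s = 0 := by omega
    have : i = 0 := by omega
    subst this
    have : r + s - ℓ - 1 - 0 = 0 := by omega
    rw [this]
  · rw [Wmk_coeff h d s ℓ r hdeg hls hsd hr, Wmk_coeff h d s ℓ r hdeg hls hsd hr]
    have e1 : (s:ℤ)-1-((r + s - ℓ - 1 - i : ℕ):ℤ) = (ℓ:ℤ)+i-r := by omega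
    have e2 : (ℓ:ℤ)+((r + s - ℓ - 1 - i : ℕ):ℤ)-r = (s:ℤ)-1-i := by omega
    rw [e1, e2]; ring

lemma main_eqn (d s ℓ r : ℕ) (h p q : ℝ[X]) (hdeg : h.natDegree = s)
    (hls : ℓ + s = d + 1) (hsd : s ≤ d) (hr : ℓ ≤ r)
    (hpq : IsSymmDecomp d h p q) :
    geomPoly r * h = p + X ^ ℓ * Wmk h d s ℓ r := by
  have hpc := pcoeff_eq d h p q (by omega) hpq
  have hpd : p.natDegree ≤ d := hpq.2.1
  ext k
  rw [geom_mul_coeff, coeff_add, X_pow_mul, coeff_mul_X_pow']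
  rcases lt_or_ge k ℓ with hk | hk
  · rw [if_neg (by omega)]
    have h1 : HZ h ((k:ℤ) - r) = 0 := HZ_neg h (by omega)
    have h2 : HZ h ((d:ℤ) - k) = HZ h d := HZ_stab' h (by omega) (by omega)
    rw [hpc k (by omega), h1, h2]; ring
  · rw [if_pos hk, Wmk_coeff h d s ℓ r hdeg hls hsd hr]
    have e2 : (ℓ:ℤ)+((k - ℓ : ℕ):ℤ)-r = (k:ℤ)-r := by omega
    have e1 : (s:ℤ)-1-((k - ℓ : ℕ):ℤ) = (d:ℤ)-k := by omega
    rw [e1, e2]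
    rcases le_or_gt k d with hkd | hkd
    · rw [hpc k hkd]; ring
    · rw [coeff_eq_zero_of_natDegree_lt (by omega : p.natDegree < k)]
      have h1 : HZ h ((d:ℤ) - k) = 0 := HZ_neg h (by omega)
      have h2 : HZ h (k:ℤ) = HZ h d := HZ_stab' h (by omega) (by omega)
      rw [h1, h2]; ring

/-- (Proposition `decomp2`.) For `h` of degree `s ≤ d` with symmetric
decomposition `(p, q)`, `ℓ = d+1-s` and `r ≥ ℓ`, there are unique symmetric polynomials
`v_r` (w.r.t. `d`) and `w_r` (w.r.t. `r+s-ℓ-1`) with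
`(1+t+⋯+t^{r-1})·h = v_r + t^ℓ·w_r`; moreover their coefficients are given by the stated
formulas and `v_r = p`. -/
theorem statement2 (d s ℓ : ℕ) (h : ℝ[X]) (hne : h ≠ 0) (hdeg : h.natDegree = s)
    (hsd : s ≤ d) (p q : ℝ[X]) (hpq : IsSymmDecomp d h p q)
    (hℓ : ℓ = d + 1 - s) (r : ℕ) (hr : ℓ ≤ r) :
    (∃! vw : ℝ[X] × ℝ[X],
      vw.1.natDegree ≤ d ∧ (∀ i ≤ d, vw.1.coeff i = vw.1.coeff (d - i)) ∧
      vw.2.natDegree ≤ r + s - ℓ - 1 ∧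
      (∀ i ≤ r + s - ℓ - 1, vw.2.coeff i = vw.2.coeff (r + s - ℓ - 1 - i)) ∧
      geomPoly r * h = vw.1 + X ^ ℓ * vw.2) ∧
    (∀ v w : ℝ[X],
      (v.natDegree ≤ d ∧ (∀ i ≤ d, v.coeff i = v.coeff (d - i)) ∧
       w.natDegree ≤ r + s - ℓ - 1 ∧
       (∀ i ≤ r + s - ℓ - 1, w.coeff i = w.coeff (r + s - ℓ - 1 - i)) ∧
       geomPoly r * h = v + X ^ ℓ * w) →
      (∀ i ≤ d, v.coeff i =
          ∑ j ∈ Finset.range (i + 1), h.coeff j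
            - ∑ j ∈ Finset.range i, coeffZ h ((d : ℤ) - j)) ∧
      (∀ i ≤ r + s - ℓ - 1, w.coeff i =
          -(∑ j ∈ Finset.range (i + 1), coeffZ h ((ℓ : ℤ) + j - r))
            + ∑ j ∈ Finset.range (i + 1), coeffZ h ((s : ℤ) - j)) ∧
      v = p) := by
  have hls : ℓ + s = d + 1 := by omega
  obtain ⟨heq, hpd, hps, hqd, hqs⟩ := hpq
  have hpq' : IsSymmDecomp d h p q := ⟨heq, hpd, hps, hqd, hqs⟩
  have hpc := pcoeff_eq d h p q (by omega) hpq'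
  set W := Wmk h d s ℓ r with hW
  have hWc := Wmk_coeff h d s ℓ r hdeg hls hsd hr
  have hWd := Wmk_natDegree h d s ℓ r hdeg hls hsd hr
  have hWs := Wmk_symm h d s ℓ r hdeg hls hsd hr
  have heqn := main_eqn d s ℓ r h p q hdeg hls hsd hr hpq'
  have huniq : ∀ y : ℝ[X] × ℝ[X],
      (y.1.natDegree ≤ d ∧ (∀ i ≤ d, y.1.coeff i = y.1.coeff (d - i)) ∧
       y.2.natDegree ≤ r + s - ℓ - 1 ∧
       (∀ i ≤ r + s - ℓ - 1, y.2.coeff i = y.2.coeff (r + s - ℓ - 1 - i)) ∧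
       geomPoly r * h = y.1 + X ^ ℓ * y.2) → y = (p, W) := by
    rintro ⟨v, w⟩ ⟨hvd, hvs, hwd, hws, hvw⟩
    have huz : v - p = X ^ ℓ * (W - w) := by
      rw [hvw] at heqn
      linear_combination heqn
    have hu0 : v - p = 0 := by
      apply coeff_zero_of d ℓ r (by omega) hr
      · calc (v - p).natDegree ≤ max v.natDegree p.natDegree := natDegree_sub_le _ _
          _ ≤ d := max_le hvd hpd
      · intro i hi
        rw [coeff_sub, coeff_sub, hvs i hi, hps i hi]
      · intro i hi
        rw [huz, X_pow_mul, coeff_mul_X_pow', if_neg (by omega)]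
      · intro j hj1 hj2
        have hnd : ℓ + 1 ≤ r + s := by omega
        rw [huz, X_pow_mul, coeff_mul_X_pow', coeff_mul_X_pow',
          if_pos (by omega), if_pos (by omega)]
        have hjm : j - ℓ ≤ r + s - ℓ - 1 := by omega
        have e : d + r - j - ℓ = r + s - ℓ - 1 - (j - ℓ) := by omega
        rw [coeff_sub, coeff_sub, hws (j-ℓ) hjm, hWs (j-ℓ) hjm, e]
    have hv : v = p := by
      have := sub_eq_zero.mp hu0
      exact this
    have hw : w = W := by
      have h2 : X ^ ℓ * w = X ^ ℓ * W := by
        rw [hv] at hvw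
        rw [hvw] at heqn
        linear_combination heqn
      have hX : (X : ℝ[X]) ^ ℓ ≠ 0 := pow_ne_zero _ X_ne_zero
      exact mul_left_cancel₀ hX h2
    rw [hv, hw]
  constructor
  · refine ⟨(p, W), ⟨hpd, hps, hWd, hWs, heqn⟩, huniq⟩
  · intro v w hprops
    have hvw := huniq (v, w) hprops
    have hv : v = p := congrArg Prod.fst hvw
    have hw : w = W := congrArg Prod.snd hvw
    refine ⟨?_, ?_, hv⟩
    · intro i hi
      rw [hv, hpc i hi]
      have h1 : ∑ j ∈ Finset.range (i+1), h.coeff j = HZ h (i:ℤ) := by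
        have e : (((i:ℕ):ℤ)+1).toNat = i + 1 := by omega
        rw [HZ, e]
      rw [h1, sum_coeffZ' h (d:ℤ) i]
      ring
    · intro i hi
      rw [hw, hWc i]
      have h1 : ∑ j ∈ Finset.range (i+1), coeffZ h ((ℓ:ℤ) + j - r)
          = HZ h ((ℓ:ℤ) + i - r) := by
        have e : ∀ j ∈ Finset.range (i+1), coeffZ h ((ℓ:ℤ) + j - r)
            = coeffZ h (((ℓ:ℤ) - r) + j) := by
          intro j _; congr 1; ring
        rw [Finset.sum_congr rfl e, sum_coeffZ h ((ℓ:ℤ) - r) (i+1)]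
        have h2 : HZ h ((ℓ:ℤ) - r - 1) = 0 := HZ_neg h (by omega)
        rw [h2]
        have e2 : (ℓ:ℤ) - r + (i+1:ℕ) - 1 = (ℓ:ℤ) + i - r := by push_cast; ring
        rw [e2]; ring
      have h2 : ∑ j ∈ Finset.range (i+1), coeffZ h ((s:ℤ) - j)
          = HZ h (d:ℤ) - HZ h ((s:ℤ) - 1 - i) := by
        rw [sum_coeffZ' h (s:ℤ) (i+1)]
        have e1 : HZ h ((s:ℤ)) = HZ h (d:ℤ) := HZ_stab' h (by omega) (by omega)
        have e2 : (s:ℤ) - ((i+1:ℕ):ℤ) = (s:ℤ) - 1 - i := by push_cast; ring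
        rw [e1, e2]
      rw [h1, h2]
      ring
end

section
/- Let h(t) be a real polynomial of degree s ≤ d with symmetric decomposition (p,q) with respect to d, let r ≥ 1 be an integer, and let (p̃, q̃) be the symmetric decomposition of U_r^{d+1}h(t) with respect to d. Then p̃(t) = (p(t)·(1+t+⋯+t^{r-1})^d)^{⟨r,0⟩} and t·q̃(t) = ((h(t)·(1+t+⋯+t^{r-1}) − p(t))·(1+t+⋯+t^{r-1})^d)^{⟨r,0⟩}. If furthermore r ≥ ℓ = d+1-s, then t·q̃(t) = (t^ℓ·w_r(t)·(1+t+⋯+t^{r-1})^d)^{⟨r,0⟩}, where w_r(t) is the unique real polynomial of degree at most r+s-ℓ-1 with w_{r,i} = w_{r,r+s-ℓ-1-i} for all i such that (1+t+⋯+t^{r-1})h(t) = p(t) + t^ℓ w_r(t). -/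
open Polynomial

open Polynomial

lemma sect_coeff' (r : ℕ) (hr : 1 ≤ r) (f : ℝ[X]) (m : ℕ) :
    (sect r 0 f).coeff m = f.coeff (r * m) := by
  rw [sect, finset_sum_coeff]
  simp only [coeff_C_mul, coeff_X_pow, mul_ite, mul_one, mul_zero, add_zero]
  rw [Finset.sum_ite_eq (Finset.range (f.natDegree + 1)) m (fun n => f.coeff (r * n))]
  split_ifs with hm
  · rfl
  · symm
    apply coeff_eq_zero_of_natDegree_lt
    have h1 : f.natDegree < m := by simpa using hm
    have h2 : m ≤ r * m := Nat.le_mul_of_pos_left m (by omega)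
    omega

lemma reflect_of_symm' {A : ℝ[X]} {m : ℕ} (hd : A.natDegree ≤ m)
    (hs : ∀ i ≤ m, A.coeff i = A.coeff (m - i)) : A.reflect m = A := by
  ext i
  rw [coeff_reflect]
  rcases le_or_gt i m with hi | hi
  · rw [revAt_le hi, ← hs i hi]
  · rw [revAt_eq_self_of_lt hi]

lemma coeff_symm_of_reflect' {A : ℝ[X]} {m : ℕ} (hA : A.reflect m = A)
    {i : ℕ} (hi : i ≤ m) : A.coeff i = A.coeff (m - i) := by
  conv_lhs => rw [← hA]
  rw [coeff_reflect, revAt_le hi]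

lemma geomPoly_coeff' (r i : ℕ) : (geomPoly r).coeff i = if i < r then 1 else 0 := by
  rw [geomPoly, finset_sum_coeff]
  simp only [coeff_X_pow]
  rw [Finset.sum_ite_eq (Finset.range r) i (fun _ => (1 : ℝ))]
  simp [Finset.mem_range]

lemma geomPoly_natDegree_le' (r : ℕ) : (geomPoly r).natDegree ≤ r - 1 := by
  rw [natDegree_le_iff_coeff_eq_zero]
  intro N hN
  rw [geomPoly_coeff']
  exact if_neg (by omega)

lemma reflect_geomPoly' (r : ℕ) (hr : 1 ≤ r) : (geomPoly r).reflect (r - 1) = geomPoly r := by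
  apply reflect_of_symm' (geomPoly_natDegree_le' r)
  intro i hi
  rw [geomPoly_coeff', geomPoly_coeff']
  have h1 : i < r := by omega
  have h2 : r - 1 - i < r := by omega
  simp [h1, h2]

lemma reflect_zero_eq' (f : ℝ[X]) : f.reflect 0 = f := by
  ext i
  rw [coeff_reflect]
  rcases Nat.eq_zero_or_pos i with rfl | hi
  · rw [revAt_le (le_refl 0)]
  · rw [revAt_eq_self_of_lt hi]

lemma natDegree_geomPoly_pow_le' (r n : ℕ) : ((geomPoly r) ^ n).natDegree ≤ n * (r - 1) :=
  natDegree_pow_le.trans (Nat.mul_le_mul le_rfl (geomPoly_natDegree_le' r))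

lemma reflect_geomPoly_pow' (r : ℕ) (hr : 1 ≤ r) (n : ℕ) :
    ((geomPoly r) ^ n).reflect (n * (r - 1)) = (geomPoly r) ^ n := by
  induction n with
  | zero => simpa using reflect_zero_eq' 1
  | succ n ih =>
    have e : (n + 1) * (r - 1) = (r - 1) + n * (r - 1) := by ring
    rw [pow_succ', e,
      reflect_mul _ _ (geomPoly_natDegree_le' r) (natDegree_geomPoly_pow_le' r n),
      reflect_geomPoly' r hr, ih]

lemma symmDecomp_unique' (d : ℕ) (h p₁ q₁ p₂ q₂ : ℝ[X])
    (h₁ : IsSymmDecomp d h p₁ q₁) (h₂ : IsSymmDecomp d h p₂ q₂) :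
    p₁ = p₂ ∧ q₁ = q₂ := by
  obtain ⟨e₁, hp₁d, hp₁s, hq₁d, hq₁s⟩ := h₁
  obtain ⟨e₂, hp₂d, hp₂s, hq₂d, hq₂s⟩ := h₂
  have key : p₁ - p₂ = X * (q₂ - q₁) := by linear_combination e₁.symm.trans e₂
  have hcoeff : ∀ i, i ≤ d → (p₁ - p₂).coeff i = 0 := by
    intro i
    induction i with
    | zero =>
      intro _
      rw [key]
      simp
    | succ i ih =>
      intro hid
      have e3 : (p₁ - p₂).coeff (i + 1) = (q₂ - q₁).coeff i := by rw [key, coeff_X_mul]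
      have e4 : (q₂ - q₁).coeff i = (q₂ - q₁).coeff (d - 1 - i) := by
        rw [coeff_sub, coeff_sub, hq₂s i (by omega), hq₁s i (by omega)]
      have e5 : (q₂ - q₁).coeff (d - 1 - i) = (p₁ - p₂).coeff (d - 1 - i + 1) := by
        rw [key, coeff_X_mul]
      have e6 : d - 1 - i + 1 = d - i := by omega
      have e7 : (p₁ - p₂).coeff (d - i) = (p₁ - p₂).coeff i := by
        rw [coeff_sub, coeff_sub, ← hp₁s i (by omega), ← hp₂s i (by omega)]
      rw [e3, e4, e5, e6, e7, ih (by omega)]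
  have hz : p₁ - p₂ = 0 := by
    ext i
    rcases le_or_gt i d with hi | hi
    · simpa using hcoeff i hi
    · simp [coeff_sub, coeff_eq_zero_of_natDegree_lt (lt_of_le_of_lt hp₁d hi),
        coeff_eq_zero_of_natDegree_lt (lt_of_le_of_lt hp₂d hi)]
  have hp : p₁ = p₂ := sub_eq_zero.mp hz
  have hqz : X * (q₂ - q₁) = 0 := by rw [← key, hz]
  have hq : q₂ - q₁ = 0 := by
    rcases mul_eq_zero.mp hqz with h' | h'
    · exact absurd h' X_ne_zero
    · exact h'
  exact ⟨hp, (sub_eq_zero.mp hq).symm⟩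
/-- Formulas for the symmetric decomposition `(p̃, q̃)` of `U_r^{d+1} h`
in terms of the symmetric decomposition `(p, q)` of `h`:
`p̃ = (p·(1+⋯+t^{r-1})^d)^{⟨r,0⟩}`, `t·q̃ = ((h·(1+⋯+t^{r-1}) − p)·(1+⋯+t^{r-1})^d)^{⟨r,0⟩}`,
and if `r ≥ ℓ = d+1-s` then `t·q̃ = (t^ℓ·w_r·(1+⋯+t^{r-1})^d)^{⟨r,0⟩}` where `w_r` is the
unique symmetric (w.r.t. `r+s-ℓ-1`) polynomial with `(1+⋯+t^{r-1})·h = p + t^ℓ·w_r`. -/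
theorem statement3 (d s : ℕ) (h : ℝ[X]) (hne : h ≠ 0) (hdeg : h.natDegree = s)
    (hsd : s ≤ d) (p q : ℝ[X]) (hpq : IsSymmDecomp d h p q)
    (r : ℕ) (hr : 1 ≤ r)
    (pt qt : ℝ[X]) (hpqt : IsSymmDecomp d (Uop r (d + 1) h) pt qt) :
    pt = sect r 0 (p * geomPoly r ^ d) ∧
    X * qt = sect r 0 ((h * geomPoly r - p) * geomPoly r ^ d) ∧
    (d + 1 - s ≤ r → ∀ w : ℝ[X],
      (w.natDegree ≤ r + s - (d + 1 - s) - 1 ∧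
       (∀ i ≤ r + s - (d + 1 - s) - 1,
          w.coeff i = w.coeff (r + s - (d + 1 - s) - 1 - i)) ∧
       geomPoly r * h = p + X ^ (d + 1 - s) * w) →
      X * qt = sect r 0 (X ^ (d + 1 - s) * w * geomPoly r ^ d)) := by
  obtain ⟨r', rfl⟩ : ∃ r', r = r' + 1 := ⟨r - 1, by omega⟩
  set g := geomPoly (r' + 1) with hgdef
  obtain ⟨hh, hpd, hps, hqd, hqs⟩ := hpq
  -- geometric polynomial facts
  have hgd : g.natDegree ≤ r' := by simpa using geomPoly_natDegree_le' (r' + 1)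
  have hgr : g.reflect r' = g := by simpa using reflect_geomPoly' (r' + 1) hr
  have hgpowd : (g ^ d).natDegree ≤ d * r' := by
    simpa using natDegree_geomPoly_pow_le' (r' + 1) d
  have hgpowr : (g ^ d).reflect (d * r') = g ^ d := by
    simpa using reflect_geomPoly_pow' (r' + 1) hr d
  -- q.coeff d = 0
  have hq_top : q.coeff d = 0 := by
    rcases Nat.eq_zero_or_pos d with hd0 | hd1
    · subst hd0
      have h1 : q.coeff 0 = (X * q).coeff 1 := (coeff_X_mul q 0).symm
      have h2 : (X * q).coeff 1 = h.coeff 1 - p.coeff 1 := by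
        rw [show X * q = h - p by linear_combination -hh, coeff_sub]
      have h3 : h.coeff 1 = 0 := coeff_eq_zero_of_natDegree_lt (by omega)
      have h4 : p.coeff 1 = 0 := coeff_eq_zero_of_natDegree_lt (by omega)
      rw [h1, h2, h3, h4, sub_zero]
    · exact coeff_eq_zero_of_natDegree_lt (by omega)
  -- reflection facts for p and X*q
  have hpr : p.reflect d = p := reflect_of_symm' hpd hps
  have hXqb : (X * q).natDegree ≤ d + 1 :=
    natDegree_mul_le.trans (by rw [natDegree_X]; omega)
  have hXqs : ∀ i ≤ d + 1, (X * q).coeff i = (X * q).coeff (d + 1 - i) := by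
    intro i hi
    rcases Nat.eq_zero_or_pos i with rfl | hi1
    · have l1 : (X * q).coeff 0 = 0 := by simp
      have l2 : (X * q).coeff (d + 1) = q.coeff d := coeff_X_mul q d
      rw [Nat.sub_zero, l1, l2, hq_top]
    · obtain ⟨j, rfl⟩ : ∃ j, i = j + 1 := ⟨i - 1, by omega⟩
      rcases le_or_gt (j + 1) d with hjd | hjd
      · have e1 : d + 1 - (j + 1) = (d - (j + 1)) + 1 := by omega
        rw [coeff_X_mul, e1, coeff_X_mul, hqs j (by omega)]
        congr 1
        omega
      · have hjd2 : j = d := by omega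
        have l1 : (X * q).coeff 0 = 0 := by simp
        rw [coeff_X_mul, hjd2, hq_top, show d + 1 - (d + 1) = 0 by omega, l1]
  have hXqr : (X * q).reflect (d + 1) = X * q := reflect_of_symm' hXqb hXqs
  -- facts about g - 1
  have hg1d : (g - 1).natDegree ≤ r' + 1 := by
    refine (natDegree_sub_le _ _).trans
      (max_le (hgd.trans (by omega)) (by rw [natDegree_one]; omega))
  have hg1s : ∀ i ≤ r' + 1, (g - 1).coeff i = (g - 1).coeff (r' + 1 - i) := by
    intro i hi
    rw [coeff_sub, coeff_sub, hgdef, geomPoly_coeff', geomPoly_coeff', coeff_one, coeff_one]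
    split_ifs <;> first | (exfalso; omega) | norm_num
  have hg1r : (g - 1).reflect (r' + 1) = g - 1 := reflect_of_symm' hg1d hg1s
  -- G = h*g - p
  have hGeq : h * g - p = p * (g - 1) + (X * q) * g := by linear_combination g * hh
  have hGd0 : (h * g - p).natDegree ≤ d + r' := by
    refine (natDegree_sub_le _ _).trans ?_
    have hmul : (h * g).natDegree ≤ h.natDegree + g.natDegree := natDegree_mul_le
    simp only [max_le_iff]
    omega
  have hGd : (h * g - p).natDegree ≤ d + (r' + 1) := hGd0.trans (by omega)
  have hGr : (h * g - p).reflect (d + (r' + 1)) = h * g - p := by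
    rw [hGeq, reflect_add]
    have t1 : (p * (g - 1)).reflect (d + (r' + 1)) = p * (g - 1) := by
      rw [reflect_mul p (g - 1) hpd hg1d, hpr, hg1r]
    have t2 : ((X * q) * g).reflect (d + (r' + 1)) = (X * q) * g := by
      rw [show d + (r' + 1) = (d + 1) + r' by omega, reflect_mul (X * q) g hXqb hgd,
        hXqr, hgr]
    rw [t1, t2]
  -- the two big products
  have hF1r : (p * g ^ d).reflect (d + d * r') = p * g ^ d := by
    rw [reflect_mul p (g ^ d) hpd hgpowd, hpr, hgpowr]
  have hF1d : (p * g ^ d).natDegree ≤ d + d * r' :=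
    natDegree_mul_le.trans (by omega)
  have hF2r : ((h * g - p) * g ^ d).reflect ((d + (r' + 1)) + d * r')
      = (h * g - p) * g ^ d := by
    rw [reflect_mul _ _ hGd hgpowd, hGr, hgpowr]
  have hF2d : ((h * g - p) * g ^ d).natDegree ≤ (d + (r' + 1)) + d * r' :=
    natDegree_mul_le.trans (by omega)
  -- define P and Q
  set P := sect (r' + 1) 0 (p * g ^ d) with hPdef
  set Q := sect (r' + 1) 0 ((h * g - p) * g ^ d) with hQdef
  have hPc : ∀ m, P.coeff m = (p * g ^ d).coeff ((r' + 1) * m) := by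
    intro m; rw [hPdef, sect_coeff' _ hr]
  have hQc : ∀ m, Q.coeff m = ((h * g - p) * g ^ d).coeff ((r' + 1) * m) := by
    intro m; rw [hQdef, sect_coeff' _ hr]
  -- U = P + Q
  have hpoly : h * g ^ (d + 1) = p * g ^ d + (h * g - p) * g ^ d := by ring
  have hU : Uop (r' + 1) (d + 1) h = P + Q := by
    ext m
    rw [Uop, ← hgdef, sect_coeff' _ hr, coeff_add, hPc, hQc, hpoly, coeff_add]
  -- properties of P
  have hPdeg : P.natDegree ≤ d := by
    rw [natDegree_le_iff_coeff_eq_zero]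
    intro N hN
    rw [hPc]
    apply coeff_eq_zero_of_natDegree_lt
    have hm : (r' + 1) * (d + 1) ≤ (r' + 1) * N := Nat.mul_le_mul le_rfl (by omega)
    have he : (r' + 1) * (d + 1) = d + d * r' + r' + 1 := by ring
    omega
  have hPs : ∀ i ≤ d, P.coeff i = P.coeff (d - i) := by
    intro i hi
    rw [hPc, hPc]
    have key : (r' + 1) * i + (r' + 1) * (d - i) = d + d * r' := by
      have e1 : i + (d - i) = d := by omega
      calc (r' + 1) * i + (r' + 1) * (d - i) = (r' + 1) * (i + (d - i)) := by ring
        _ = (r' + 1) * d := by rw [e1]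
        _ = d + d * r' := by ring
    have hA : (r' + 1) * i ≤ d + d * r' := by omega
    rw [coeff_symm_of_reflect' hF1r hA]
    congr 1
    omega
  -- properties of Q
  have hQ0 : Q.coeff 0 = 0 := by
    rw [hQc, Nat.mul_zero, mul_coeff_zero, coeff_sub, mul_coeff_zero]
    have hh0 : h.coeff 0 = p.coeff 0 := by
      rw [hh, coeff_add, mul_coeff_zero, coeff_X_zero, zero_mul, add_zero]
    have hg0 : g.coeff 0 = 1 := by rw [hgdef, geomPoly_coeff']; simp
    rw [hh0, hg0, mul_one, sub_self, zero_mul]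
  have hQvanish : ∀ n, d < n → Q.coeff n = 0 := by
    intro n hn
    rw [hQc]
    apply coeff_eq_zero_of_natDegree_lt
    have hF2d0 : ((h * g - p) * g ^ d).natDegree ≤ (d + r') + d * r' :=
      natDegree_mul_le.trans (by omega)
    have hm : (r' + 1) * (d + 1) ≤ (r' + 1) * n := Nat.mul_le_mul le_rfl (by omega)
    have he : (r' + 1) * (d + 1) = (d + r') + d * r' + 1 := by ring
    omega
  have hQsymm : ∀ i ≤ d, Q.coeff i = Q.coeff (d + 1 - i) := by
    intro i hi
    rw [hQc, hQc]
    have key : (r' + 1) * i + (r' + 1) * (d + 1 - i) = (d + (r' + 1)) + d * r' := by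
      have e1 : i + (d + 1 - i) = d + 1 := by omega
      calc (r' + 1) * i + (r' + 1) * (d + 1 - i) = (r' + 1) * (i + (d + 1 - i)) := by ring
        _ = (r' + 1) * (d + 1) := by rw [e1]
        _ = (d + (r' + 1)) + d * r' := by ring
    have hA : (r' + 1) * i ≤ (d + (r' + 1)) + d * r' := by omega
    rw [coeff_symm_of_reflect' hF2r hA]
    congr 1
    omega
  -- Q = X * Q.divX
  have hQX : X * Q.divX = Q := by
    conv_rhs => rw [← X_mul_divX_add Q]
    rw [hQ0, map_zero, add_zero]
  -- Q.divX properties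
  have hqtdeg : Q.divX.natDegree ≤ d - 1 := by
    rw [natDegree_le_iff_coeff_eq_zero]
    intro N hN
    rw [coeff_divX]
    exact hQvanish (N + 1) (by omega)
  have hqts : ∀ i ≤ d - 1, Q.divX.coeff i = Q.divX.coeff (d - 1 - i) := by
    intro i hi
    rw [coeff_divX, coeff_divX]
    rcases Nat.eq_zero_or_pos d with rfl | hd
    · obtain rfl : i = 0 := by omega
      norm_num
    · rw [show d - 1 - i + 1 = d + 1 - (i + 1) by omega]
      exact hQsymm (i + 1) (by omega)
  -- uniqueness
  have hdecomp : IsSymmDecomp d (Uop (r' + 1) (d + 1) h) P Q.divX :=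
    ⟨by rw [hU, hQX], hPdeg, hPs, hqtdeg, hqts⟩
  obtain ⟨hp_eq, hq_eq⟩ := symmDecomp_unique' d _ pt qt P Q.divX hpqt hdecomp
  refine ⟨hp_eq, ?_, ?_⟩
  · rw [hq_eq, hQX]
  · intro _ w hw
    obtain ⟨_, _, hw3⟩ := hw
    have heq : h * g - p = X ^ (d + 1 - s) * w := by linear_combination hw3
    rw [hq_eq, hQX, hQdef, heq]
end

section
/- Let h(t) be a real polynomial of degree at most d satisfying Property (H), let r ≥ 1 be an integer, and let (p̃, q̃) be the symmetric decomposition of U_r^{d+1}h(t) with respect to d. Then p̃ has only nonnegative coefficients. -/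
open Polynomial

namespace Stmt4

open Finset Polynomial

lemma geom_coeff (r n : ℕ) : (geomPoly r).coeff n = if n < r then 1 else 0 := by
  rw [geomPoly, finset_sum_coeff]
  simp only [coeff_X_pow]
  rw [Finset.sum_ite_eq (Finset.range r) n (fun _ => (1:ℝ))]
  simp [Finset.mem_range]

lemma geom_natDegree {r : ℕ} (hr : 1 ≤ r) : (geomPoly r).natDegree = r - 1 := by
  apply le_antisymm
  · rw [natDegree_le_iff_coeff_eq_zero]
    intro N hN
    rw [geom_coeff, if_neg (by omega)]
  · apply le_natDegree_of_ne_zero (n := r - 1)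
    rw [geom_coeff, if_pos (by omega)]
    norm_num

lemma geom_monic {r : ℕ} (hr : 1 ≤ r) : (geomPoly r).Monic := by
  unfold Polynomial.Monic
  rw [Polynomial.leadingCoeff, geom_natDegree hr, geom_coeff, if_pos (by omega)]

lemma H_natDegree {r : ℕ} (hr : 1 ≤ r) (d : ℕ) :
    ((geomPoly r) ^ d).natDegree = (r - 1) * d := by
  rw [(geom_monic hr).natDegree_pow, geom_natDegree hr, Nat.mul_comm]

lemma H_coeff_nonneg (r d n : ℕ) : 0 ≤ ((geomPoly r) ^ d).coeff n := by
  induction d generalizing n with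
  | zero =>
    simp only [pow_zero, coeff_one]
    split <;> norm_num
  | succ d ih =>
    rw [pow_succ, coeff_mul]
    apply Finset.sum_nonneg
    intro ij _
    apply mul_nonneg (ih _)
    rw [geom_coeff]
    split <;> norm_num

lemma geom_reverse {r : ℕ} (hr : 1 ≤ r) : (geomPoly r).reverse = geomPoly r := by
  ext n
  rw [coeff_reverse, geom_natDegree hr]
  rcases le_or_gt n (r-1) with hn | hn
  · rw [revAt_le hn, geom_coeff, geom_coeff, if_pos (by omega), if_pos (by omega)]
  · rw [revAt_eq_self_of_lt hn]

lemma H_reverse {r : ℕ} (hr : 1 ≤ r) (d : ℕ) :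
    ((geomPoly r) ^ d).reverse = (geomPoly r) ^ d := by
  induction d with
  | zero => rw [pow_zero, ← Polynomial.C_1, Polynomial.reverse_C]
  | succ d ih => rw [pow_succ, Polynomial.reverse_mul_of_domain, ih, geom_reverse hr]

lemma H_sym {r : ℕ} (hr : 1 ≤ r) (d k : ℕ) (hk : k ≤ (r-1)*d) :
    ((geomPoly r) ^ d).coeff ((r-1)*d - k) = ((geomPoly r) ^ d).coeff k := by
  have hd := H_natDegree hr d
  conv_rhs => rw [← H_reverse hr d, coeff_reverse, hd, revAt_le hk]

noncomputable def Tf (r d : ℕ) (x : ℤ) : ℝ :=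
  ∑ k ∈ Finset.range ((r-1)*d+1), if (k:ℤ) ≤ x then ((geomPoly r) ^ d).coeff k else 0

lemma Tf_neg {r d : ℕ} {x : ℤ} (hx : x < 0) : Tf r d x = 0 := by
  apply Finset.sum_eq_zero
  intro k _
  rw [if_neg (by omega)]

lemma Tf_nonneg (r d : ℕ) (x : ℤ) : 0 ≤ Tf r d x := by
  apply Finset.sum_nonneg
  intro k _
  split
  · exact H_coeff_nonneg r d k
  · exact le_refl 0

lemma Tf_mono (r d : ℕ) {x y : ℤ} (hxy : x ≤ y) : Tf r d x ≤ Tf r d y := by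
  apply Finset.sum_le_sum
  intro k _
  by_cases hk : (k:ℤ) ≤ x
  · rw [if_pos hk, if_pos (hk.trans hxy)]
  · rw [if_neg hk]
    split
    · exact H_coeff_nonneg r d k
    · exact le_refl 0

lemma Tf_top (r d : ℕ) {x : ℤ} (hx : (((r-1)*d : ℕ) : ℤ) ≤ x) :
    Tf r d x = Tf r d ((r-1)*d : ℕ) := by
  apply Finset.sum_congr rfl
  intro k hk
  have hk' := Finset.mem_range.mp hk
  have h1 : (k:ℤ) ≤ ((r-1)*d : ℕ) := by exact_mod_cast Nat.lt_succ_iff.mp hk'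
  rw [if_pos (h1.trans hx), if_pos h1]

lemma Tf_sym {r : ℕ} (hr : 1 ≤ r) (d : ℕ) (x : ℤ) :
    Tf r d x + Tf r d ((((r-1)*d : ℕ) : ℤ) - 1 - x) = Tf r d ((r-1)*d : ℕ) := by
  have key : Tf r d ((((r-1)*d : ℕ) : ℤ) - 1 - x)
      = ∑ k ∈ Finset.range ((r-1)*d+1),
          if ¬ ((k:ℤ) ≤ x) then ((geomPoly r) ^ d).coeff k else 0 := by
    rw [Tf, ← Finset.sum_range_reflect]
    apply Finset.sum_congr rfl
    intro k hk
    have hk' : k ≤ (r-1)*d := Nat.lt_succ_iff.mp (Finset.mem_range.mp hk)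
    have hidx : (r-1)*d + 1 - 1 - k = (r-1)*d - k := by omega
    rw [hidx, H_sym hr d k hk']
    refine if_congr ?_ rfl rfl
    omega
  rw [key, Tf, ← Finset.sum_add_distrib]
  apply Finset.sum_congr rfl
  intro k hk
  have hk' : k ≤ (r-1)*d := Nat.lt_succ_iff.mp (Finset.mem_range.mp hk)
  have h1 : (k:ℤ) ≤ ((r-1)*d : ℕ) := by exact_mod_cast hk'
  rw [if_pos h1]
  by_cases hc : (k:ℤ) ≤ x
  · rw [if_pos hc, if_neg (by simpa using hc), add_zero]
  · rw [if_neg hc, if_pos hc, zero_add]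

lemma coeffZ_G {r : ℕ} (hr : 1 ≤ r) (d : ℕ) (x : ℤ) :
    coeffZ ((geomPoly r) ^ (d+1)) x = Tf r d x - Tf r d (x - r) := by
  have hr' : (1:ℤ) ≤ (r:ℤ) := by exact_mod_cast hr
  rcases lt_or_ge x 0 with hx | hx
  · rw [coeffZ, if_neg (by omega), Tf_neg hx, Tf_neg (by omega), sub_zero]
  · obtain ⟨n, rfl⟩ : ∃ n : ℕ, x = (n:ℤ) := ⟨x.toNat, (Int.toNat_of_nonneg hx).symm⟩
    rw [coeffZ, if_pos hx]
    have htn : ((n:ℤ)).toNat = n := by omega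
    rw [htn]
    have hHdeg : ((geomPoly r) ^ d).natDegree = (r-1)*d := H_natDegree hr d
    rw [pow_succ, coeff_mul, Finset.Nat.sum_antidiagonal_eq_sum_range_succ_mk]
    have step1 : ∀ k ∈ Finset.range (n+1),
        ((geomPoly r) ^ d).coeff k * (geomPoly r).coeff (n - k)
        = (if (k:ℤ) ≤ (n:ℤ) ∧ (n:ℤ) - r < k then ((geomPoly r) ^ d).coeff k else 0) := by
      intro k hk
      have hk' := Finset.mem_range.mp hk
      rw [geom_coeff, mul_ite, mul_one, mul_zero]
      exact if_congr (by omega) rfl rfl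
    rw [Finset.sum_congr rfl step1]
    have e1 : (∑ k ∈ Finset.range (n+1),
          if (k:ℤ) ≤ (n:ℤ) ∧ (n:ℤ) - r < k then ((geomPoly r) ^ d).coeff k else 0)
        = ∑ k ∈ Finset.range (n + (r-1)*d + 1),
          if (k:ℤ) ≤ (n:ℤ) ∧ (n:ℤ) - r < k then ((geomPoly r) ^ d).coeff k else 0 := by
      apply Finset.sum_subset (Finset.range_subset_range.mpr (by omega))
      intro k _ hk2
      have hk3 : n + 1 ≤ k := by simpa [Finset.mem_range, Nat.not_lt] using hk2
      rw [if_neg (by omega)]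
    have e2 : Tf r d (n:ℤ) - Tf r d ((n:ℤ) - r)
        = ∑ k ∈ Finset.range (n + (r-1)*d + 1),
          ((if (k:ℤ) ≤ (n:ℤ) then ((geomPoly r) ^ d).coeff k else 0)
            - (if (k:ℤ) ≤ (n:ℤ) - r then ((geomPoly r) ^ d).coeff k else 0)) := by
      rw [Tf, Tf, ← Finset.sum_sub_distrib]
      apply Finset.sum_subset (Finset.range_subset_range.mpr (by omega))
      intro k _ hk2
      have hk3 : (r-1)*d + 1 ≤ k := by simpa [Finset.mem_range, Nat.not_lt] using hk2
      have hz : ((geomPoly r) ^ d).coeff k = 0 :=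
        coeff_eq_zero_of_natDegree_lt (by omega)
      rw [hz]
      simp
    rw [e1, e2]
    apply Finset.sum_congr rfl
    intro k _
    by_cases h1 : (k:ℤ) ≤ (n:ℤ)
    · by_cases h2 : (k:ℤ) ≤ (n:ℤ) - r
      · rw [if_neg (by omega), if_pos h1, if_pos h2]
        ring
      · rw [if_pos ⟨h1, by omega⟩, if_pos h1, if_neg h2]
        ring
    · rw [if_neg (by omega), if_neg h1, if_neg (by omega)]
      ring

noncomputable def phiF (r d i : ℕ) (k : ℤ) : ℝ :=
  (∑ j ∈ Finset.range (i+1), coeffZ ((geomPoly r) ^ (d+1)) ((r:ℤ)*(j:ℤ) - k)) -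
   ∑ j ∈ Finset.range i, coeffZ ((geomPoly r) ^ (d+1)) ((r:ℤ)*((d:ℤ)-(j:ℤ)) - k)

lemma phiF_repr {r : ℕ} (hr : 1 ≤ r) (d i : ℕ) {k : ℤ} (hk : 0 ≤ k) :
    phiF r d i k = Tf r d ((r:ℤ)*i - k) + Tf r d ((r:ℤ)*((d:ℤ)-(i:ℤ)) - k)
      - Tf r d ((r:ℤ)*(d:ℤ) - k) := by
  have hr' : (1:ℤ) ≤ (r:ℤ) := by exact_mod_cast hr
  rw [phiF]
  have s1 : (∑ j ∈ Finset.range (i+1), coeffZ ((geomPoly r) ^ (d+1)) ((r:ℤ)*(j:ℤ) - k))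
      = Tf r d ((r:ℤ)*(i:ℤ) - k) := by
    have c1 : ∀ j ∈ Finset.range (i+1),
        coeffZ ((geomPoly r) ^ (d+1)) ((r:ℤ)*(j:ℤ) - k)
        = Tf r d ((r:ℤ)*(((j+1 : ℕ)):ℤ) - (r:ℤ) - k)
          - Tf r d ((r:ℤ)*((j:ℕ):ℤ) - (r:ℤ) - k) := by
      intro j _
      rw [coeffZ_G hr d]
      rw [show (r:ℤ)*(((j+1 : ℕ)):ℤ) - (r:ℤ) - k = (r:ℤ)*(j:ℤ) - k by push_cast; ring,
          show (r:ℤ)*((j:ℕ):ℤ) - (r:ℤ) - k = (r:ℤ)*(j:ℤ) - k - r by ring]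
    calc (∑ j ∈ Finset.range (i+1), coeffZ ((geomPoly r) ^ (d+1)) ((r:ℤ)*(j:ℤ) - k))
        = ∑ j ∈ Finset.range (i+1),
            (Tf r d ((r:ℤ)*(((j+1 : ℕ)):ℤ) - (r:ℤ) - k)
              - Tf r d ((r:ℤ)*((j:ℕ):ℤ) - (r:ℤ) - k)) := Finset.sum_congr rfl c1
      _ = Tf r d ((r:ℤ)*(((i+1 : ℕ)):ℤ) - (r:ℤ) - k)
            - Tf r d ((r:ℤ)*(((0 : ℕ)):ℤ) - (r:ℤ) - k) :=
          Finset.sum_range_sub (fun m : ℕ => Tf r d ((r:ℤ)*((m:ℕ):ℤ) - (r:ℤ) - k)) (i+1)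
      _ = Tf r d ((r:ℤ)*(i:ℤ) - k) := by
          rw [show (r:ℤ)*(((i+1 : ℕ)):ℤ) - (r:ℤ) - k = (r:ℤ)*(i:ℤ) - k by push_cast; ring,
            Tf_neg (x := (r:ℤ)*(((0 : ℕ)):ℤ) - (r:ℤ) - k) (by push_cast; linarith), sub_zero]
  have s2 : (∑ j ∈ Finset.range i, coeffZ ((geomPoly r) ^ (d+1)) ((r:ℤ)*((d:ℤ)-(j:ℤ)) - k))
      = Tf r d ((r:ℤ)*(d:ℤ) - k) - Tf r d ((r:ℤ)*((d:ℤ)-(i:ℤ)) - k) := by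
    have c2 : ∀ j ∈ Finset.range i,
        coeffZ ((geomPoly r) ^ (d+1)) ((r:ℤ)*((d:ℤ)-(j:ℤ)) - k)
        = Tf r d ((r:ℤ)*((d:ℤ)-((j:ℕ):ℤ)) - k)
          - Tf r d ((r:ℤ)*((d:ℤ)-(((j+1 : ℕ)):ℤ)) - k) := by
      intro j _
      rw [coeffZ_G hr d]
      rw [show (r:ℤ)*((d:ℤ)-(((j+1 : ℕ)):ℤ)) - k = (r:ℤ)*((d:ℤ)-((j:ℕ):ℤ)) - k - r by
        push_cast; ring]
    calc (∑ j ∈ Finset.range i, coeffZ ((geomPoly r) ^ (d+1)) ((r:ℤ)*((d:ℤ)-(j:ℤ)) - k))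
        = ∑ j ∈ Finset.range i,
            (Tf r d ((r:ℤ)*((d:ℤ)-((j:ℕ):ℤ)) - k)
              - Tf r d ((r:ℤ)*((d:ℤ)-(((j+1 : ℕ)):ℤ)) - k)) := Finset.sum_congr rfl c2
      _ = Tf r d ((r:ℤ)*((d:ℤ)-(((0 : ℕ)):ℤ)) - k)
            - Tf r d ((r:ℤ)*((d:ℤ)-((i:ℕ):ℤ)) - k) :=
          Finset.sum_range_sub' (fun m : ℕ => Tf r d ((r:ℤ)*((d:ℤ)-((m:ℕ):ℤ)) - k)) i
      _ = Tf r d ((r:ℤ)*(d:ℤ) - k) - Tf r d ((r:ℤ)*((d:ℤ)-(i:ℤ)) - k) := by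
          rw [show (r:ℤ)*((d:ℤ)-(((0:ℕ)):ℤ)) - k = (r:ℤ)*(d:ℤ) - k by push_cast; ring]
  rw [s1, s2]
  ring

lemma castM {r : ℕ} (hr : 1 ≤ r) (d : ℕ) :
    (((r-1)*d : ℕ) : ℤ) = (r:ℤ)*(d:ℤ) - (d:ℤ) := by
  rw [Nat.cast_mul, Nat.cast_sub hr]
  push_cast
  ring

lemma phiF_antisym {r : ℕ} (hr : 1 ≤ r) (d i : ℕ) {k : ℤ} (hk1 : 1 ≤ k) (hk2 : k ≤ d) :
    phiF r d i k = - phiF r d i ((d:ℤ) + 1 - k) := by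
  have hM := castM hr d
  rw [phiF_repr hr d i (by omega), phiF_repr hr d i (show (0:ℤ) ≤ (d:ℤ) + 1 - k by omega)]
  have s1 := Tf_sym hr d ((r:ℤ)*(i:ℤ) - ((d:ℤ)+1-k))
  rw [show (((r-1)*d : ℕ):ℤ) - 1 - ((r:ℤ)*(i:ℤ) - ((d:ℤ)+1-k))
      = (r:ℤ)*((d:ℤ)-(i:ℤ)) - k by rw [hM]; ring] at s1
  have s2 := Tf_sym hr d ((r:ℤ)*((d:ℤ)-(i:ℤ)) - ((d:ℤ)+1-k))
  rw [show (((r-1)*d : ℕ):ℤ) - 1 - ((r:ℤ)*((d:ℤ)-(i:ℤ)) - ((d:ℤ)+1-k))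
      = (r:ℤ)*(i:ℤ) - k by rw [hM]; ring] at s2
  have s3 : Tf r d ((r:ℤ)*(d:ℤ) - ((d:ℤ)+1-k)) = Tf r d ((r-1)*d : ℕ) := by
    have h := Tf_sym hr d (-k)
    rw [Tf_neg (by omega), zero_add] at h
    rw [show (r:ℤ)*(d:ℤ) - ((d:ℤ)+1-k) = (((r-1)*d : ℕ):ℤ) - 1 - (-k) by rw [hM]; ring]
    exact h
  have s4 : Tf r d ((r:ℤ)*(d:ℤ) - k) = Tf r d ((r-1)*d : ℕ) :=
    Tf_top r d (by rw [hM]; linarith)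
  linarith

lemma phiF_t_nonneg {r : ℕ} (hr : 1 ≤ r) (d i : ℕ) :
    0 ≤ phiF r d i (((d+1)/2 : ℕ) : ℤ) := by
  have hM := castM hr d
  have h2t : ((2*((d+1)/2) : ℕ) : ℤ) ≤ (d:ℤ) + 1 := by exact_mod_cast (by omega : 2*((d+1)/2) ≤ d+1)
  have htd : (((d+1)/2 : ℕ) : ℤ) ≤ (d:ℤ) := by exact_mod_cast (by omega : (d+1)/2 ≤ d)
  rw [phiF_repr hr d i (by positivity)]
  have s1 := Tf_sym hr d ((r:ℤ)*(i:ℤ) + (((d+1)/2 : ℕ):ℤ) - (d:ℤ) - 1)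
  rw [show (((r-1)*d : ℕ):ℤ) - 1 - ((r:ℤ)*(i:ℤ) + (((d+1)/2 : ℕ):ℤ) - (d:ℤ) - 1)
      = (r:ℤ)*((d:ℤ)-(i:ℤ)) - (((d+1)/2 : ℕ):ℤ) by rw [hM]; ring] at s1
  have s4 : Tf r d ((r:ℤ)*(d:ℤ) - (((d+1)/2 : ℕ):ℤ)) = Tf r d ((r-1)*d : ℕ) :=
    Tf_top r d (by rw [hM]; linarith)
  have mono := Tf_mono r d
    (show (r:ℤ)*(i:ℤ) + (((d+1)/2 : ℕ):ℤ) - (d:ℤ) - 1 ≤ (r:ℤ)*(i:ℤ) - (((d+1)/2 : ℕ):ℤ) by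
      push_cast at h2t ⊢; linarith)
  linarith

lemma phiF_diff_nonneg {r : ℕ} (hr : 1 ≤ r) (d i l : ℕ) (hl : l < d) :
    0 ≤ phiF r d i (l:ℤ) - phiF r d i ((l:ℤ)+1) := by
  have hM := castM hr d
  have hl' : ((l:ℤ)) < (d:ℤ) := by exact_mod_cast hl
  rw [phiF_repr hr d i (show (0:ℤ) ≤ (l:ℤ) by positivity),
      phiF_repr hr d i (show (0:ℤ) ≤ (l:ℤ)+1 by positivity)]
  have s4a : Tf r d ((r:ℤ)*(d:ℤ) - (l:ℤ)) = Tf r d ((r-1)*d : ℕ) :=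
    Tf_top r d (by rw [hM]; linarith)
  have s4b : Tf r d ((r:ℤ)*(d:ℤ) - ((l:ℤ)+1)) = Tf r d ((r-1)*d : ℕ) :=
    Tf_top r d (by rw [hM]; linarith)
  have m1 := Tf_mono r d (show (r:ℤ)*(i:ℤ) - ((l:ℤ)+1) ≤ (r:ℤ)*(i:ℤ) - (l:ℤ) by linarith)
  have m2 := Tf_mono r d
    (show (r:ℤ)*((d:ℤ)-(i:ℤ)) - ((l:ℤ)+1) ≤ (r:ℤ)*((d:ℤ)-(i:ℤ)) - (l:ℤ) by linarith)
  linarith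

lemma sect_coeff {r : ℕ} (hr : 1 ≤ r) (f : ℝ[X]) (n : ℕ) :
    (sect r 0 f).coeff n = f.coeff (r * n) := by
  rw [sect, finset_sum_coeff]
  simp only [coeff_C_mul, coeff_X_pow, mul_ite, mul_one, mul_zero]
  rw [Finset.sum_ite_eq (Finset.range (f.natDegree+1)) n (fun m => f.coeff (r*m+0))]
  by_cases hn : n ∈ Finset.range (f.natDegree+1)
  · rw [if_pos hn]
    simp
  · rw [if_neg hn]
    symm
    apply coeff_eq_zero_of_natDegree_lt
    have h1 : f.natDegree < n := by
      simp only [Finset.mem_range, Nat.not_lt] at hn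
      omega
    have h2 : n ≤ r * n := Nat.le_mul_of_pos_left n (by omega)
    exact lt_of_lt_of_le h1 h2

lemma mul_coeff_expand {d : ℕ} {h : ℝ[X]} (hdeg : h.natDegree ≤ d) (G : ℝ[X]) (n : ℕ) :
    (h * G).coeff n = ∑ k ∈ Finset.range (d+1), h.coeff k * coeffZ G ((n:ℤ) - (k:ℤ)) := by
  rw [coeff_mul, Finset.Nat.sum_antidiagonal_eq_sum_range_succ_mk]
  have step1 : ∀ k ∈ Finset.range (n+1),
      h.coeff k * G.coeff (n-k) = h.coeff k * coeffZ G ((n:ℤ) - (k:ℤ)) := by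
    intro k hk
    have hk' := Finset.mem_range.mp hk
    rw [coeffZ, if_pos (by omega)]
    have : ((n:ℤ) - (k:ℤ)).toNat = n - k := by omega
    rw [this]
  rw [Finset.sum_congr rfl step1]
  have e1 : (∑ k ∈ Finset.range (n+1), h.coeff k * coeffZ G ((n:ℤ) - (k:ℤ)))
      = ∑ k ∈ Finset.range (n+d+1), h.coeff k * coeffZ G ((n:ℤ) - (k:ℤ)) := by
    apply Finset.sum_subset (Finset.range_subset_range.mpr (by omega))
    intro k _ hk2
    have hk3 : n + 1 ≤ k := by simpa [Finset.mem_range, Nat.not_lt] using hk2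
    rw [coeffZ, if_neg (by omega), mul_zero]
  have e2 : (∑ k ∈ Finset.range (d+1), h.coeff k * coeffZ G ((n:ℤ) - (k:ℤ)))
      = ∑ k ∈ Finset.range (n+d+1), h.coeff k * coeffZ G ((n:ℤ) - (k:ℤ)) := by
    apply Finset.sum_subset (Finset.range_subset_range.mpr (by omega))
    intro k _ hk2
    have hk3 : d + 1 ≤ k := by simpa [Finset.mem_range, Nat.not_lt] using hk2
    rw [coeff_eq_zero_of_natDegree_lt (by omega), zero_mul]
  rw [e1]
  exact e2.symm

noncomputable def eseq (d : ℕ) (h : ℝ[X]) (m : ℕ) : ℝ :=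
  (∑ j ∈ Finset.range (m+1), h.coeff j) - ∑ j ∈ Finset.range m, coeffZ h ((d:ℤ) - (j:ℤ))

lemma eseq_nonneg {d : ℕ} {h : ℝ[X]} (hH : PropH d h) (m : ℕ) : 0 ≤ eseq d h m :=
  sub_nonneg.mpr (hH m)

lemma eseq_succ (d : ℕ) (h : ℝ[X]) (m : ℕ) :
    eseq d h (m+1) = eseq d h m + h.coeff (m+1) - coeffZ h ((d:ℤ) - (m:ℤ)) := by
  rw [eseq, eseq, Finset.sum_range_succ (fun j => h.coeff j) (m+1),
      Finset.sum_range_succ (fun j => coeffZ h ((d:ℤ) - (j:ℤ))) m]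
  ring

end Stmt4


/-- If `h` has degree at most `d` and satisfies Property (H), then the first
part `p̃` of the symmetric decomposition of `U_r^{d+1} h` has only nonnegative coefficients. -/
theorem statement4 (d : ℕ) (h : ℝ[X]) (hdeg : h.natDegree ≤ d) (hH : PropH d h)
    (r : ℕ) (hr : 1 ≤ r)
    (pt qt : ℝ[X]) (hpq : IsSymmDecomp d (Uop r (d + 1) h) pt qt) :
    ∀ i, 0 ≤ pt.coeff i := by
  open Finset Stmt4 in
  obtain ⟨hsum, hpd, hpsym, hqd, hqsym⟩ := hpq
  set U : ℝ[X] := Uop r (d+1) h with hU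
  have hUco : ∀ n : ℕ, U.coeff n
      = ∑ k ∈ Finset.range (d+1), h.coeff k
          * coeffZ ((geomPoly r) ^ (d+1)) (((r*n : ℕ):ℤ) - (k:ℤ)) := by
    intro n
    rw [hU, Uop, sect_coeff hr, mul_coeff_expand hdeg]
  set t : ℕ := (d+1)/2 with htdef
  -- main inequality for the partial-sum expressions
  have main : ∀ i, i ≤ d →
      0 ≤ (∑ j ∈ Finset.range (i+1), U.coeff j) - ∑ j ∈ Finset.range i, U.coeff (d - j) := by
    intro i hi
    have swap1 : (∑ j ∈ Finset.range (i+1), U.coeff j)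
        = ∑ k ∈ Finset.range (d+1), h.coeff k
            * (∑ j ∈ Finset.range (i+1), coeffZ ((geomPoly r) ^ (d+1)) ((r:ℤ)*(j:ℤ) - (k:ℤ))) := by
      rw [Finset.sum_congr rfl (fun j _ => hUco j), Finset.sum_comm]
      apply Finset.sum_congr rfl
      intro k _
      rw [Finset.mul_sum]
      apply Finset.sum_congr rfl
      intro j _
      rw [show (((r*j : ℕ)):ℤ) = (r:ℤ)*(j:ℤ) by push_cast; ring]
    have swap2 : (∑ j ∈ Finset.range i, U.coeff (d - j))
        = ∑ k ∈ Finset.range (d+1), h.coeff k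
            * (∑ j ∈ Finset.range i,
                coeffZ ((geomPoly r) ^ (d+1)) ((r:ℤ)*((d:ℤ)-(j:ℤ)) - (k:ℤ))) := by
      rw [Finset.sum_congr rfl (fun j _ => hUco (d-j)), Finset.sum_comm]
      apply Finset.sum_congr rfl
      intro k _
      rw [Finset.mul_sum]
      apply Finset.sum_congr rfl
      intro j hj
      have hj' : j < i := Finset.mem_range.mp hj
      rw [show (((r*(d-j) : ℕ)):ℤ) = (r:ℤ)*((d:ℤ)-(j:ℤ)) by
        push_cast [Nat.cast_sub (by omega : j ≤ d)]; ring]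
    rw [swap1, swap2, ← Finset.sum_sub_distrib]
    have phie : ∀ k ∈ Finset.range (d+1),
        (h.coeff k * (∑ j ∈ Finset.range (i+1),
            coeffZ ((geomPoly r) ^ (d+1)) ((r:ℤ)*(j:ℤ) - (k:ℤ)))
          - h.coeff k * (∑ j ∈ Finset.range i,
            coeffZ ((geomPoly r) ^ (d+1)) ((r:ℤ)*((d:ℤ)-(j:ℤ)) - (k:ℤ))))
        = h.coeff k * phiF r d i (k:ℤ) := by
      intro k _
      rw [phiF]
      ring
    rw [Finset.sum_congr rfl phie]
    -- Abel summation
    have abel : ∀ m : ℕ,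
        (∑ j ∈ Finset.range (m+1), h.coeff j * phiF r d i (j:ℤ))
          - ∑ j ∈ Finset.range m, coeffZ h ((d:ℤ) - (j:ℤ)) * phiF r d i ((j:ℤ)+1)
        = (∑ l ∈ Finset.range (m+1),
            eseq d h l * (phiF r d i (l:ℤ) - phiF r d i ((l:ℤ)+1)))
          + eseq d h m * phiF r d i ((m:ℤ)+1) := by
      intro m
      induction m with
      | zero =>
        simp [eseq]
        ring
      | succ m ih =>
        rw [Finset.sum_range_succ (fun j => h.coeff j * phiF r d i (j:ℤ)) (m+1),
            Finset.sum_range_succ (fun j => coeffZ h ((d:ℤ) - (j:ℤ)) * phiF r d i ((j:ℤ)+1)) m,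
            Finset.sum_range_succ
              (fun l => eseq d h l * (phiF r d i (l:ℤ) - phiF r d i ((l:ℤ)+1))) (m+1)]
        have c1 : (((m+1 : ℕ)):ℤ) = (m:ℤ)+1 := by push_cast; ring
        rw [c1]
        have erec := eseq_succ d h m
        linear_combination ih - phiF r d i ((m:ℤ)+1) * erec
    -- splitting off the tail and reflecting it
    have tled : t ≤ d := by omega
    have split : (∑ k ∈ Finset.range (d+1), h.coeff k * phiF r d i (k:ℤ))
        = (∑ j ∈ Finset.range (t+1), h.coeff j * phiF r d i (j:ℤ))
          + ∑ k ∈ Finset.Ico (t+1) (d+1), h.coeff k * phiF r d i (k:ℤ) :=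
      (Finset.sum_range_add_sum_Ico _ (by omega)).symm
    have ico : (∑ k ∈ Finset.Ico (t+1) (d+1), h.coeff k * phiF r d i (k:ℤ))
        = - ∑ j ∈ Finset.range (d - t), h.coeff (d - j) * phiF r d i ((j:ℤ)+1) := by
      rw [Finset.sum_Ico_eq_sum_range]
      rw [show d+1-(t+1) = d-t by omega]
      rw [← Finset.sum_range_reflect]
      rw [← Finset.sum_neg_distrib]
      apply Finset.sum_congr rfl
      intro j hj
      have hj' : j < d - t := Finset.mem_range.mp hj
      have hidx : t+1+(d-t-1-j) = d - j := by omega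
      rw [hidx]
      have hc2 : (((d - j : ℕ)):ℤ) = (d:ℤ) - (j:ℤ) := by omega
      rw [hc2]
      rw [phiF_antisym hr d i (k := (d:ℤ)-(j:ℤ)) (by omega) (by omega)]
      rw [show (d:ℤ)+1-((d:ℤ)-(j:ℤ)) = (j:ℤ)+1 by ring]
      ring
    have rngt : (∑ j ∈ Finset.range t, coeffZ h ((d:ℤ) - (j:ℤ)) * phiF r d i ((j:ℤ)+1))
        = ∑ j ∈ Finset.range (d - t), h.coeff (d - j) * phiF r d i ((j:ℤ)+1) := by
      have conv : ∀ j ∈ Finset.range t,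
          coeffZ h ((d:ℤ) - (j:ℤ)) * phiF r d i ((j:ℤ)+1)
          = h.coeff (d - j) * phiF r d i ((j:ℤ)+1) := by
        intro j hj
        have hj' : j < t := Finset.mem_range.mp hj
        rw [coeffZ, if_pos (by omega)]
        rw [show ((d:ℤ) - (j:ℤ)).toNat = d - j by omega]
      rw [Finset.sum_congr rfl conv]
      by_cases hpar : d - t = t
      · rw [hpar]
      · have h1a : d - t = t - 1 := by omega
        have h1b : 1 ≤ t := by omega
        have hphit : phiF r d i ((t:ℕ):ℤ) = 0 := by
          have ha := phiF_antisym hr d i (k := ((t:ℕ):ℤ))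
            (by exact_mod_cast h1b) (by exact_mod_cast tled)
          rw [show (d:ℤ)+1-((t:ℕ):ℤ) = ((t:ℕ):ℤ) by omega] at ha
          linarith
        have hs := Finset.sum_range_succ
          (fun j => h.coeff (d-j) * phiF r d i ((j:ℤ)+1)) (t-1)
        rw [show t-1+1 = t by omega] at hs
        rw [hs]
        rw [show (((t-1 : ℕ)):ℤ)+1 = ((t:ℕ):ℤ) by omega]
        rw [hphit, mul_zero, add_zero, h1a]
    have key : (∑ k ∈ Finset.range (d+1), h.coeff k * phiF r d i (k:ℤ))
        = (∑ l ∈ Finset.range t,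
            eseq d h l * (phiF r d i (l:ℤ) - phiF r d i ((l:ℤ)+1)))
          + eseq d h t * phiF r d i (t:ℤ) := by
      rw [split, ico, ← rngt, ← sub_eq_add_neg, abel t,
          Finset.sum_range_succ
            (fun l => eseq d h l * (phiF r d i (l:ℤ) - phiF r d i ((l:ℤ)+1))) t]
      ring
    rw [key]
    apply add_nonneg
    · apply Finset.sum_nonneg
      intro l hl
      have hl' : l < t := Finset.mem_range.mp hl
      exact mul_nonneg (eseq_nonneg hH l) (phiF_diff_nonneg hr d i l (by omega))
    · refine mul_nonneg (eseq_nonneg hH t) ?_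
      rw [htdef]
      exact phiF_t_nonneg hr d i
  -- uniqueness of the symmetric-decomposition coefficients
  have uniq : ∀ i, i ≤ d → pt.coeff i
      = (∑ j ∈ Finset.range (i+1), U.coeff j) - ∑ j ∈ Finset.range i, U.coeff (d - j) := by
    intro i
    induction i with
    | zero =>
      intro _
      have h0 : U.coeff 0 = pt.coeff 0 := by
        rw [hsum, coeff_add, mul_coeff_zero, coeff_X_zero, zero_mul, add_zero]
      simp [h0]
    | succ i ih =>
      intro hi1
      have hi : i ≤ d := by omega
      have hq : qt.coeff i = U.coeff (d - i) - pt.coeff i := by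
        have e1 : U.coeff ((d-i-1)+1) = pt.coeff ((d-i-1)+1) + qt.coeff (d-i-1) := by
          rw [hsum, coeff_add, coeff_X_mul]
        rw [show (d-i-1)+1 = d-i by omega] at e1
        have e2 : qt.coeff i = qt.coeff (d-1-i) := hqsym i (by omega)
        have e3 : pt.coeff i = pt.coeff (d-i) := hpsym i hi
        rw [e2, show d-1-i = d-i-1 by omega]
        linarith
      have hrec : U.coeff (i+1) = pt.coeff (i+1) + qt.coeff i := by
        rw [hsum, coeff_add, coeff_X_mul]
      rw [Finset.sum_range_succ (fun j => U.coeff j) (i+1),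
          Finset.sum_range_succ (fun j => U.coeff (d-j)) i]
      have := ih hi
      linarith
  intro i
  by_cases hi : i ≤ d
  · rw [uniq i hi]
    exact main i hi
  · rw [coeff_eq_zero_of_natDegree_lt (lt_of_le_of_lt hpd (by omega))]
end

section
/- Let h(t) be a real polynomial of degree s ≤ d with nonnegative coefficients satisfying Property (H), and suppose 2s ≤ d+1. If (p̃, q̃) is the symmetric decomposition of U_r^{d+1}h(t) with respect to d, then p̃ is real-rooted for every integer r with 2r ≥ d+1. -/
open Polynomial

namespace St7


lemma coeffZ_natCast (h : ℝ[X]) (n : ℕ) : coeffZ h n = h.coeff n := by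
  simp [coeffZ]

lemma coeffZ_neg (h : ℝ[X]) {j : ℤ} (hj : j < 0) : coeffZ h j = 0 := by
  simp [coeffZ, not_le.2 hj]

lemma coeffZ_zero (j : ℤ) : coeffZ (0 : ℝ[X]) j = 0 := by
  simp [coeffZ]

lemma coeffZ_add (p q : ℝ[X]) (j : ℤ) : coeffZ (p + q) j = coeffZ p j + coeffZ q j := by
  unfold coeffZ; split <;> simp

lemma coeffZ_sub (p q : ℝ[X]) (j : ℤ) : coeffZ (p - q) j = coeffZ p j - coeffZ q j := by
  unfold coeffZ; split <;> simp

lemma coeffZ_C_mul (a : ℝ) (p : ℝ[X]) (j : ℤ) : coeffZ (C a * p) j = a * coeffZ p j := by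
  unfold coeffZ; split <;> simp

lemma coeffZ_sum {ι : Type*} (S : Finset ι) (f : ι → ℝ[X]) (j : ℤ) :
    coeffZ (∑ i ∈ S, f i) j = ∑ i ∈ S, coeffZ (f i) j := by
  unfold coeffZ; split <;> simp [Polynomial.finset_sum_coeff]

lemma coeffZ_X_pow_mul (k : ℕ) (p : ℝ[X]) (j : ℤ) :
    coeffZ (X ^ k * p) j = coeffZ p (j - k) := by
  rcases lt_or_ge j 0 with hj | hj
  · rw [coeffZ_neg _ hj, coeffZ_neg]
    omega
  · obtain ⟨n, rfl⟩ := Int.eq_ofNat_of_zero_le hj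
    rw [coeffZ_natCast, mul_comm, Polynomial.coeff_mul_X_pow']
    rcases le_or_gt k n with hk | hk
    · have : ((n : ℤ) - k) = ((n - k : ℕ) : ℤ) := by omega
      rw [if_pos hk, this, coeffZ_natCast]
    · rw [if_neg (by omega), (coeffZ_neg p (by omega : (n:ℤ) - k < 0))]

lemma coeffZ_eq_zero_of_gt (p : ℝ[X]) {j : ℤ} (hj : (p.natDegree : ℤ) < j) :
    coeffZ p j = 0 := by
  rcases lt_or_ge j 0 with h | h
  · exact coeffZ_neg _ h
  · obtain ⟨n, rfl⟩ := Int.eq_ofNat_of_zero_le h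
    rw [coeffZ_natCast]
    exact Polynomial.coeff_eq_zero_of_natDegree_lt (by exact_mod_cast hj)

lemma coeffZ_mul_geom (p : ℝ[X]) (r : ℕ) (j : ℤ) :
    coeffZ (p * geomPoly r) j = ∑ i ∈ Finset.range r, coeffZ p (j - i) := by
  unfold geomPoly
  rw [Finset.mul_sum, coeffZ_sum]
  refine Finset.sum_congr rfl fun i _ => ?_
  rw [mul_comm, coeffZ_X_pow_mul]

lemma coeffZ_mul_one_sub_X_pow (p : ℝ[X]) (r : ℕ) (j : ℤ) :
    coeffZ (p * (1 - X ^ r)) j = coeffZ p j - coeffZ p (j - r) := by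
  rw [mul_sub, mul_one, coeffZ_sub, mul_comm, coeffZ_X_pow_mul]

lemma one_sub_X_mul_geom (r : ℕ) : (1 - X) * geomPoly r = 1 - X ^ (r : ℕ) := by
  have := geom_sum_mul (X : ℝ[X]) r
  unfold geomPoly
  linear_combination -this

/-- expansion of `coeffZ (A * G)` over coefficients of `A`. -/
lemma coeffZ_mul_expand (A G : ℝ[X]) (n : ℕ) (hA : A.natDegree < n) (m : ℤ) :
    coeffZ (A * G) m = ∑ j ∈ Finset.range n, A.coeff j * coeffZ G (m - j) := by
  conv_lhs => rw [Polynomial.as_sum_range' A n hA]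
  rw [Finset.sum_mul, coeffZ_sum]
  refine Finset.sum_congr rfl fun j _ => ?_
  rw [← Polynomial.C_mul_X_pow_eq_monomial, mul_assoc, coeffZ_C_mul, coeffZ_X_pow_mul]

/-- vanishing of coefficients of `P * g^D` beyond the obvious degree bound. -/
lemma coeffZ_mul_geom_pow_eq_zero (P : ℝ[X]) (r D : ℕ) {m : ℤ}
    (hm : (P.natDegree : ℤ) + (r - 1 : ℕ) * D < m) :
    coeffZ (P * geomPoly r ^ D) m = 0 := by
  induction D generalizing m with
  | zero => simp only [pow_zero, mul_one]; exact coeffZ_eq_zero_of_gt P (by push_cast at hm ⊢; omega)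
  | succ D ih =>
    rw [pow_succ, ← mul_assoc, coeffZ_mul_geom]
    refine Finset.sum_eq_zero fun i hi => ?_
    have hi' : (i : ℤ) ≤ ((r - 1 : ℕ) : ℤ) := by
      have h1 := Finset.mem_range.1 hi
      omega
    have he : ((r - 1 : ℕ) : ℤ) * ((D + 1 : ℕ) : ℤ) = ((r - 1 : ℕ) : ℤ) * D + ((r - 1 : ℕ) : ℤ) := by
      push_cast; ring
    refine ih ?_
    push_cast at hm hi' ⊢
    nlinarith [hm, hi']

/-- coefficients of the constant polynomial 1. -/
lemma coeffZ_one (m : ℤ) : coeffZ (1 : ℝ[X]) m = if m = 0 then 1 else 0 := by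
  unfold coeffZ
  rcases lt_or_ge m 0 with h | h
  · rw [if_neg (by omega), if_neg (by omega)]
  · rw [if_pos h, Polynomial.coeff_one]
    by_cases hm : m = 0
    · simp [hm]
    · rw [if_neg (by omega), if_neg hm]

/-- symmetry of the coefficients of `geomPoly r ^ D`. -/
lemma coeffZ_geom_pow_symm (r D : ℕ) (m : ℤ) :
    coeffZ (geomPoly r ^ D) m = coeffZ (geomPoly r ^ D) (((r : ℤ) - 1) * D - m) := by
  induction D generalizing m with
  | zero =>
    simp only [pow_zero, Nat.cast_zero, mul_zero, zero_sub, coeffZ_one]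
    by_cases hm : m = 0
    · simp [hm]
    · rw [if_neg hm, if_neg (by omega)]
  | succ D ih =>
    rw [pow_succ, coeffZ_mul_geom, coeffZ_mul_geom,
      ← Finset.sum_range_reflect
        (fun i => coeffZ (geomPoly r ^ D) ((((r : ℤ) - 1) * ((D : ℕ) + 1 : ℕ) - m) - i)) r]
    refine Finset.sum_congr rfl fun i hi => ?_
    have hi' := Finset.mem_range.1 hi
    rw [ih]
    have hcast : ((r - 1 - i : ℕ) : ℤ) = (r : ℤ) - 1 - i := by omega
    simp only [hcast]
    push_cast
    ring_nf



/-- the symmetrized polynomial `∑_j h_j (t^j + ⋯ + t^{d-j})`. -/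
noncomputable def htilde (d : ℕ) (h : ℝ[X]) : ℝ[X] :=
  ∑ j ∈ Finset.range (d + 1), C (h.coeff j) * ∑ k ∈ Finset.Icc j (d - j), X ^ k

lemma htilde_coeff (d : ℕ) (h : ℝ[X]) (m : ℕ) :
    (htilde d h).coeff m =
      ∑ j ∈ Finset.range (d + 1), if j ≤ m ∧ m + j ≤ d then h.coeff j else 0 := by
  unfold htilde
  rw [Polynomial.finset_sum_coeff]
  refine Finset.sum_congr rfl fun j hj => ?_
  have hj' := Finset.mem_range.1 hj
  rw [Polynomial.coeff_C_mul, Polynomial.finset_sum_coeff]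
  have : ∑ k ∈ Finset.Icc j (d - j), (X ^ k : ℝ[X]).coeff m
      = ∑ k ∈ Finset.Icc j (d - j), if k = m then 1 else 0 := by
    refine Finset.sum_congr rfl fun k _ => ?_
    rw [Polynomial.coeff_X_pow]
    simp [eq_comm]
  rw [this, Finset.sum_ite_eq' (Finset.Icc j (d - j)) m (fun _ => (1:ℝ))]
  by_cases hm : j ≤ m ∧ m + j ≤ d
  · rw [if_pos (Finset.mem_Icc.2 ⟨hm.1, by omega⟩), if_pos hm, mul_one]
  · rw [if_neg, if_neg hm, mul_zero]
    intro hc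
    have := Finset.mem_Icc.1 hc
    omega

lemma htilde_coeff_nonneg (d : ℕ) (h : ℝ[X]) (hnn : ∀ i, 0 ≤ h.coeff i) (m : ℕ) :
    0 ≤ (htilde d h).coeff m := by
  rw [htilde_coeff]
  refine Finset.sum_nonneg fun j _ => ?_
  split <;> simp [hnn]

lemma htilde_coeff_zero_of_gt (d : ℕ) (h : ℝ[X]) {m : ℕ} (hm : d < m) :
    (htilde d h).coeff m = 0 := by
  rw [htilde_coeff]
  refine Finset.sum_eq_zero fun j _ => if_neg (by omega)

lemma htilde_natDegree (d : ℕ) (h : ℝ[X]) : (htilde d h).natDegree ≤ d :=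
  Polynomial.natDegree_le_iff_coeff_eq_zero.2 fun _ hm => htilde_coeff_zero_of_gt d h hm

section ineq
variable (d r : ℕ) (h : ℝ[X]) (hnn : ∀ i, 0 ≤ h.coeff i) (hr2 : d + 1 ≤ 2 * r)

include hnn hr2 in
lemma htilde_anti_high {a b : ℕ} (ha : r ≤ a) (hab : a ≤ b) :
    (htilde d h).coeff b ≤ (htilde d h).coeff a := by
  rw [htilde_coeff, htilde_coeff]
  refine Finset.sum_le_sum fun j hj => ?_
  by_cases hb : j ≤ b ∧ b + j ≤ d
  · rw [if_pos hb, if_pos (by omega)]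
  · rw [if_neg hb]
    split
    · exact hnn j
    · exact le_rfl

include hnn in
lemma htilde_mono_low {u v : ℕ} (huv : u ≤ v) (hv : 2 * v + 1 ≤ d) :
    (htilde d h).coeff u ≤ (htilde d h).coeff v := by
  rw [htilde_coeff, htilde_coeff]
  refine Finset.sum_le_sum fun j hj => ?_
  by_cases hu : j ≤ u ∧ u + j ≤ d
  · rw [if_pos hu, if_pos (by omega)]
  · rw [if_neg hu]
    split
    · exact hnn j
    · exact le_rfl

include hnn hr2 in
lemma htilde_cross {u v : ℕ} (huv : u ≤ v) :
    (htilde d h).coeff (v + r) * (htilde d h).coeff u ≤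
      (htilde d h).coeff v * (htilde d h).coeff (u + r) := by
  by_cases hd : d < v + r
  · rw [htilde_coeff_zero_of_gt d h hd, zero_mul]
    exact mul_nonneg (htilde_coeff_nonneg d h hnn v) (htilde_coeff_nonneg d h hnn (u + r))
  · push_neg at hd
    have h2v : 2 * v + 1 ≤ d := by omega
    rw [mul_comm ((htilde d h).coeff v)]
    exact mul_le_mul (htilde_anti_high d r h hnn hr2 (Nat.le_add_left r u) (by omega))
      (htilde_mono_low d h hnn huv h2v)
      (htilde_coeff_nonneg d h hnn u) (htilde_coeff_nonneg d h hnn (u + r))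

end ineq

lemma telescope (a b : ℕ) (hab : a ≤ b + 1) :
    (∑ k ∈ Finset.Icc a b, (X : ℝ[X]) ^ k) * (1 - X) = X ^ a - X ^ (b + 1) := by
  induction b with
  | zero =>
    interval_cases a
    · rw [show Finset.Icc 0 0 = {0} by rfl]
      rw [Finset.sum_singleton]
      norm_num
    · rw [Finset.Icc_eq_empty_of_lt (by omega)]
      simp
  | succ b ih =>
    rcases Nat.lt_or_ge (b + 1) a with hlt | hle
    · have : a = b + 2 := by omega
      subst this
      rw [Finset.Icc_eq_empty_of_lt (by omega)]
      simp
    · rw [Finset.sum_Icc_succ_top (by omega), add_mul, ih hle]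
      ring

end St7

namespace St7

section ident
variable (d r s : ℕ) (h : ℝ[X])

/-- Identity A : `htilde * (1-X) = ∑_j h_j (X^j - X^{d+1-j})`. -/
lemma identityA (hyp : ∀ j, j ≤ d → 2 * j ≤ d + 1 ∨ h.coeff j = 0) :
    htilde d h * (1 - X) =
      ∑ j ∈ Finset.range (d + 1), C (h.coeff j) * (X ^ j - X ^ (d + 1 - j)) := by
  unfold htilde
  rw [Finset.sum_mul]
  refine Finset.sum_congr rfl fun j hj => ?_
  have hj' : j ≤ d := by have := Finset.mem_range.1 hj; omega
  rcases hyp j hj' with hsm | hz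
  · rcases Nat.lt_or_ge (2 * j) (d + 1) with hlt | hge
    · -- 2j ≤ d
      rw [mul_assoc, telescope j (d - j) (by omega), show d - j + 1 = d + 1 - j by omega]
    · -- 2j = d+1
      have h2 : 2 * j = d + 1 := by omega
      rw [Finset.Icc_eq_empty_of_lt (by omega), Finset.sum_empty, mul_zero, zero_mul]
      have : d + 1 - j = j := by omega
      rw [this, sub_self, mul_zero]
  · rw [hz]
    simp

/-- the reflected polynomial `∑_j h_j X^{d+1-j}`. -/
noncomputable def Rpoly : ℝ[X] := ∑ j ∈ Finset.range (d + 1), C (h.coeff j) * X ^ (d + 1 - j)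

/-- The key polynomial identity. -/
lemma keyIdent (hd : h.natDegree ≤ d) (hyp : ∀ j, j ≤ d → 2 * j ≤ d + 1 ∨ h.coeff j = 0) :
    (htilde d h * geomPoly r ^ d) * (1 - X ^ r) =
      h * geomPoly r ^ (d + 1) - Rpoly d h * geomPoly r ^ (d + 1) := by
  have e1 : (htilde d h * geomPoly r ^ d) * (1 - X ^ r)
      = (htilde d h * (1 - X)) * geomPoly r ^ (d + 1) := by
    rw [← one_sub_X_mul_geom r, pow_succ]
    ring
  rw [e1, identityA d h hyp]
  have hh : h = ∑ j ∈ Finset.range (d + 1), C (h.coeff j) * X ^ j := by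
    conv_lhs => rw [Polynomial.as_sum_range' h (d + 1) (by omega)]
    exact Finset.sum_congr rfl fun j _ => (Polynomial.C_mul_X_pow_eq_monomial).symm
  have e3 : (∑ j ∈ Finset.range (d + 1), C (h.coeff j) * (X ^ j - X ^ (d + 1 - j)))
      = (∑ j ∈ Finset.range (d + 1), C (h.coeff j) * X ^ j)
        - ∑ j ∈ Finset.range (d + 1), C (h.coeff j) * X ^ (d + 1 - j) := by
    rw [← Finset.sum_sub_distrib]
    exact Finset.sum_congr rfl fun j _ => by ring
  rw [e3, ← hh, sub_mul]
  rfl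

end ident

section coeffs
variable (d r s : ℕ) (h : ℝ[X]) (hr : 1 ≤ r)

/-- the coefficients of `Uop`. -/
lemma Uop_coeff (D n : ℕ) (hr : 1 ≤ r) :
    (Uop r D h).coeff n = coeffZ (h * geomPoly r ^ D) (r * n) := by
  set f := h * geomPoly r ^ D with hf
  rw [show ((r : ℤ) * n) = ((r * n : ℕ) : ℤ) by push_cast; ring, coeffZ_natCast]
  unfold Uop sect
  rw [Polynomial.finset_sum_coeff]
  have : ∀ m ∈ Finset.range (f.natDegree + 1),
      (C (f.coeff (r * m + 0)) * X ^ m).coeff n = if n = m then f.coeff (r * m) else 0 := by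
    intro m _
    rw [Polynomial.coeff_C_mul, Polynomial.coeff_X_pow]
    by_cases hm : n = m <;> simp [hm]
  rw [Finset.sum_congr rfl this, Finset.sum_ite_eq (Finset.range (f.natDegree + 1)) n
    (fun m => f.coeff (r * m))]
  by_cases hn : n ∈ Finset.range (f.natDegree + 1)
  · rw [if_pos hn]
  · rw [if_neg hn]
    have hn' : f.natDegree < n := by
      have := Finset.mem_range.not.1 hn; omega
    exact (Polynomial.coeff_eq_zero_of_natDegree_lt
      (lt_of_lt_of_le hn' (Nat.le_mul_of_pos_left n (by omega)))).symm

end coeffs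

end St7

namespace St7

section rg
variable (d r : ℕ) (h : ℝ[X])

lemma Rg_coeff (hd : h.natDegree ≤ d) (i : ℕ) (hi : i ≤ d + 1) :
    coeffZ (Rpoly d h * geomPoly r ^ (d + 1)) ((r : ℤ) * i) =
      coeffZ (h * geomPoly r ^ (d + 1)) ((r : ℤ) * ((d : ℤ) + 1 - i)) := by
  rw [coeffZ_mul_expand h (geomPoly r ^ (d+1)) (d+1) (by omega)]
  unfold Rpoly
  rw [Finset.sum_mul, coeffZ_sum]
  refine Finset.sum_congr rfl fun j hj => ?_
  have hj' : j ≤ d := by have := Finset.mem_range.1 hj; omega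
  rw [mul_assoc, coeffZ_C_mul, coeffZ_X_pow_mul, coeffZ_geom_pow_symm]
  congr 1
  have hc : ((d + 1 - j : ℕ) : ℤ) = (d : ℤ) + 1 - j := by omega
  rw [hc]
  push_cast
  ring

lemma u_top_zero (hd : h.natDegree ≤ d) (hr : 1 ≤ r) :
    coeffZ (h * geomPoly r ^ (d + 1)) ((r : ℤ) * ((d : ℤ) + 1)) = 0 := by
  refine coeffZ_mul_geom_pow_eq_zero h r (d+1) ?_
  have h1 : ((r - 1 : ℕ) : ℤ) = (r : ℤ) - 1 := by omega
  have h2 : (h.natDegree : ℤ) ≤ d := by exact_mod_cast hd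
  rw [h1]
  push_cast
  nlinarith [h1, h2]

lemma BB_rec (hd : h.natDegree ≤ d) (hyp : ∀ j, j ≤ d → 2 * j ≤ d + 1 ∨ h.coeff j = 0)
    (i : ℕ) (h1 : 1 ≤ i) (h2 : i ≤ d) :
    coeffZ (htilde d h * geomPoly r ^ d) ((r : ℤ) * i)
      - coeffZ (htilde d h * geomPoly r ^ d) ((r : ℤ) * ((i : ℤ) - 1))
    = coeffZ (h * geomPoly r ^ (d + 1)) ((r : ℤ) * i)
      - coeffZ (h * geomPoly r ^ (d + 1)) ((r : ℤ) * ((d : ℤ) + 1 - i)) := by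
  have hk := congrArg (fun P => coeffZ P ((r : ℤ) * i)) (keyIdent d r h hd hyp)
  simp only [coeffZ_mul_one_sub_X_pow, coeffZ_sub] at hk
  rw [show (r : ℤ) * i - r = (r : ℤ) * ((i : ℤ) - 1) by ring] at hk
  rw [hk, Rg_coeff d r h hd i (by omega)]

lemma BB_zero (hd : h.natDegree ≤ d) (hyp : ∀ j, j ≤ d → 2 * j ≤ d + 1 ∨ h.coeff j = 0)
    (hr : 1 ≤ r) :
    coeffZ (htilde d h * geomPoly r ^ d) 0 = coeffZ (h * geomPoly r ^ (d + 1)) 0 := by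
  have hk := congrArg (fun P => coeffZ P ((r : ℤ) * (0 : ℕ))) (keyIdent d r h hd hyp)
  simp only [coeffZ_mul_one_sub_X_pow, coeffZ_sub] at hk
  rw [Rg_coeff d r h hd 0 (by omega)] at hk
  simp only [Nat.cast_zero, mul_zero, zero_sub, sub_zero] at hk ⊢
  rw [coeffZ_neg _ (by omega : -(r:ℤ) < 0), sub_zero] at hk
  have hu := u_top_zero d r h hd hr
  rw [hk, hu, sub_zero]

end rg

/-- the recursively defined section family. -/
noncomputable def Fp (htl : ℝ[X]) (r : ℕ) : ℕ → ℕ → ℝ[X]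
  | 0 => fun k => ∑ n ∈ Finset.range 3, C (coeffZ htl ((r : ℤ) * n - k)) * X ^ n
  | (m+1) => fun k =>
      (∑ i ∈ Finset.Ico k r, Fp htl r m i) + X * ∑ i ∈ Finset.range k, Fp htl r m i

lemma Fp_coeff (htl : ℝ[X]) (r : ℕ) (hdeg : htl.natDegree + 1 ≤ 2 * r) :
    ∀ m k n, k < r →
      (Fp htl r m k).coeff n = coeffZ (htl * geomPoly r ^ m) ((r : ℤ) * n - k) := by
  intro m
  induction m with
  | zero =>
    intro k n hk
    rw [pow_zero, mul_one]
    show (∑ n' ∈ Finset.range 3, C (coeffZ htl ((r : ℤ) * n' - k)) * X ^ n').coeff n = _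
    rw [Polynomial.finset_sum_coeff]
    have he : ∀ n' ∈ Finset.range 3,
        (C (coeffZ htl ((r : ℤ) * n' - k)) * X ^ n').coeff n
        = if n = n' then coeffZ htl ((r : ℤ) * n' - k) else 0 := by
      intro n' _
      rw [Polynomial.coeff_C_mul, Polynomial.coeff_X_pow]
      by_cases hm : n = n' <;> simp [hm]
    rw [Finset.sum_congr rfl he, Finset.sum_ite_eq (Finset.range 3) n
      (fun n' => coeffZ htl ((r : ℤ) * n' - k))]
    by_cases hn : n ∈ Finset.range 3
    · rw [if_pos hn]
    · rw [if_neg hn]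
      have hn3 : 3 ≤ n := by have := Finset.mem_range.not.1 hn; omega
      refine (coeffZ_eq_zero_of_gt htl ?_).symm
      have h3 : (r : ℤ) * 3 ≤ (r : ℤ) * n :=
        mul_le_mul_of_nonneg_left (by exact_mod_cast hn3) (by positivity)
      omega
  | succ m ih =>
    intro k n hk
    show ((∑ i ∈ Finset.Ico k r, Fp htl r m i) + X * ∑ i ∈ Finset.range k, Fp htl r m i).coeff n
      = _
    rw [pow_succ, ← mul_assoc, coeffZ_mul_geom, Polynomial.coeff_add,
      Polynomial.finset_sum_coeff]
    -- RHS split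
    have hkr : k ≤ r := le_of_lt hk
    have rsplit : ∑ i ∈ Finset.range r, coeffZ (htl * geomPoly r ^ m) ((r:ℤ) * n - k - i)
        = (∑ i ∈ Finset.range (r - k), coeffZ (htl * geomPoly r ^ m) ((r:ℤ) * n - k - i))
          + ∑ i ∈ Finset.range k, coeffZ (htl * geomPoly r ^ m) ((r:ℤ) * n - k - (r - k + i)) := by
      rw [Finset.range_eq_Ico, ← Finset.sum_Ico_consecutive _ (Nat.zero_le (r-k)) (by omega),
        ← Finset.range_eq_Ico, Finset.sum_Ico_eq_sum_range]
      congr 1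
      refine Finset.sum_congr (by congr 1; omega) fun i _ => ?_
      congr 1
      push_cast [Nat.cast_sub hkr]
      ring
    rw [rsplit]
    congr 1
    · rw [Finset.sum_Ico_eq_sum_range]
      refine Finset.sum_congr rfl fun i hi => ?_
      have hik : k + i < r := by
        have := Finset.mem_range.1 hi; omega
      rw [ih (k + i) n hik]
      congr 1
      push_cast
      ring
    · cases n with
      | zero =>
        rw [Polynomial.mul_coeff_zero, Polynomial.coeff_X_zero, zero_mul]
        symm
        refine Finset.sum_eq_zero fun i _ => coeffZ_neg _ ?_
        simp only [Nat.cast_zero, mul_zero]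
        omega
      | succ n' =>
        rw [Polynomial.coeff_X_mul, Polynomial.finset_sum_coeff]
        refine Finset.sum_congr rfl fun i hi => ?_
        rw [ih i n' (lt_trans (Finset.mem_range.1 hi) hk)]
        congr 1
        push_cast
        ring

end St7

open Complex

namespace St7

noncomputable def Tr (z : ℂ) (r : ℕ) (v : ℕ → ℂ) (k : ℕ) : ℂ :=
  (∑ i ∈ Finset.Ico k r, v i) + z * ∑ i ∈ Finset.range k, v i

lemma polar_mul (A φ B ψ : ℝ) :
    ((A : ℂ) * Complex.exp (φ * I)) * ((B : ℂ) * Complex.exp (ψ * I))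
      = ((A * B : ℝ) : ℂ) * Complex.exp (((φ + ψ : ℝ) : ℂ) * I) := by
  rw [Complex.ofReal_add, add_mul, Complex.exp_add]
  push_cast
  ring

lemma polar_conj (A φ : ℝ) :
    (starRingEnd ℂ) ((A : ℂ) * Complex.exp (φ * I))
      = (A : ℂ) * Complex.exp (((-φ : ℝ) : ℂ) * I) := by
  rw [map_mul, Complex.conj_ofReal, ← Complex.exp_conj]
  congr 1
  simp [Complex.conj_I]

lemma polar_mul_exp (A φ ψ : ℝ) :
    ((A : ℂ) * Complex.exp (φ * I)) * Complex.exp (ψ * I)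
      = (A : ℂ) * Complex.exp (((φ + ψ : ℝ) : ℂ) * I) := by
  rw [Complex.ofReal_add, add_mul, Complex.exp_add]
  ring

lemma polar_im (A φ : ℝ) : ((A : ℂ) * Complex.exp (φ * I)).im = A * Real.sin φ := by
  rw [Complex.mul_im, Complex.ofReal_re, Complex.ofReal_im, zero_mul, add_zero,
    Complex.exp_ofReal_mul_I_im]

lemma polar_re (A φ : ℝ) : ((A : ℂ) * Complex.exp (φ * I)).re = A * Real.cos φ := by
  rw [Complex.mul_re, Complex.ofReal_re, Complex.ofReal_im, zero_mul, sub_zero,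
    Complex.exp_ofReal_mul_I_re]

/-- sum of vectors in a closed sector of width `< π`. -/
lemma sector_sum {ι : Type*} (S : Finset ι) (c : ι → ℂ) (a b : ℝ)
    (hab : a ≤ b) (hba : b - a < Real.pi)
    (hc : ∀ t ∈ S, ∃ ρ : ℝ, 0 ≤ ρ ∧ ∃ φ : ℝ, a ≤ φ ∧ φ ≤ b ∧
      c t = (ρ : ℂ) * Complex.exp (φ * I)) :
    ∃ ρ : ℝ, 0 ≤ ρ ∧ ∃ φ : ℝ, a ≤ φ ∧ φ ≤ b ∧
      (∑ t ∈ S, c t) = (ρ : ℂ) * Complex.exp (φ * I) ∧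
      (ρ = 0 → ∀ t ∈ S, c t = 0) := by
  classical
  set w := ∑ t ∈ S, c t with hw
  -- imaginary part after rotating by -a is nonnegative
  have him_a : 0 ≤ (w * Complex.exp (((-a : ℝ) : ℂ) * I)).im := by
    rw [hw, Finset.sum_mul, Complex.im_sum]
    refine Finset.sum_nonneg fun t ht => ?_
    obtain ⟨ρ, hρ, φ, hφa, hφb, hrep⟩ := hc t ht
    rw [hrep, polar_mul_exp, polar_im]
    exact mul_nonneg hρ (Real.sin_nonneg_of_nonneg_of_le_pi (by linarith) (by linarith))
  have him_b : (w * Complex.exp (((-b : ℝ) : ℂ) * I)).im ≤ 0 := by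
    rw [hw, Finset.sum_mul, Complex.im_sum]
    refine Finset.sum_nonpos fun t ht => ?_
    obtain ⟨ρ, hρ, φ, hφa, hφb, hrep⟩ := hc t ht
    rw [hrep, polar_mul_exp, polar_im]
    have : Real.sin (φ + -b) ≤ 0 := by
      rw [show φ + -b = -(b - φ) by ring, Real.sin_neg, neg_nonpos]
      exact Real.sin_nonneg_of_nonneg_of_le_pi (by linarith) (by linarith)
    exact mul_nonpos_of_nonneg_of_nonpos hρ this
  -- real part after rotating by -(a+b)/2
  have hre : ∀ t ∈ S, 0 ≤ (c t * Complex.exp (((-(a + b) / 2 : ℝ) : ℂ) * I)).re := by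
    intro t ht
    obtain ⟨ρ, hρ, φ, hφa, hφb, hrep⟩ := hc t ht
    rw [hrep, polar_mul_exp, polar_re]
    refine mul_nonneg hρ (le_of_lt (Real.cos_pos_of_mem_Ioo ⟨by linarith, by linarith⟩))
  have hrePos : ∀ t ∈ S, c t ≠ 0 → 0 < (c t * Complex.exp (((-(a + b) / 2 : ℝ) : ℂ) * I)).re := by
    intro t ht hne
    obtain ⟨ρ, hρ, φ, hφa, hφb, hrep⟩ := hc t ht
    have hρpos : 0 < ρ := by
      rcases lt_or_eq_of_le hρ with h | h
      · exact h
      · exfalso; apply hne; rw [hrep, ← h]; simp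
    rw [hrep, polar_mul_exp, polar_re]
    exact mul_pos hρpos (Real.cos_pos_of_mem_Ioo ⟨by linarith, by linarith⟩)
  by_cases hw0 : w = 0
  · refine ⟨0, le_rfl, a, le_rfl, hab, by rw [hw0]; simp, fun _ => ?_⟩
    -- all terms vanish
    intro t ht
    by_contra hne
    have hsum : (w * Complex.exp (((-(a + b) / 2 : ℝ) : ℂ) * I)).re = 0 := by
      rw [hw0, zero_mul, Complex.zero_re]
    rw [hw, Finset.sum_mul, Complex.re_sum] at hsum
    have : 0 < ∑ t ∈ S, (c t * Complex.exp (((-(a + b) / 2 : ℝ) : ℂ) * I)).re :=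
      Finset.sum_pos' hre ⟨t, ht, hrePos t ht hne⟩
    linarith
  · -- w ≠ 0
    set u := w * Complex.exp (((-a : ℝ) : ℂ) * I) with hu
    have hune : u ≠ 0 := mul_ne_zero hw0 (Complex.exp_ne_zero _)
    have hargu0 : 0 ≤ u.arg := Complex.arg_nonneg_iff.2 him_a
    have harguπ : u.arg ≤ Real.pi := Complex.arg_le_pi u
    have h2 : w = u * Complex.exp (((a : ℝ) : ℂ) * I) := by
      rw [hu, mul_assoc, ← Complex.exp_add]
      norm_num
    have h3 : ‖u‖ = ‖w‖ := by
      rw [hu, norm_mul, Complex.norm_exp_ofReal_mul_I, mul_one]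
    have hrepw : w = ((‖w‖ : ℝ) : ℂ) * Complex.exp (((u.arg + a : ℝ) : ℂ) * I) := by
      conv_lhs => rw [h2, ← Complex.norm_mul_exp_arg_mul_I u]
      rw [h3, polar_mul_exp]
    have habsw : 0 < ‖w‖ := norm_pos_iff.2 hw0
    refine ⟨‖w‖, le_of_lt habsw, u.arg + a, by linarith, ?_, hrepw, ?_⟩
    · -- u.arg + a ≤ b
      by_contra hgt
      push_neg at hgt
      have hba' : b - a < u.arg := by linarith
      have him_b' : (‖w‖) * Real.sin (u.arg - (b - a)) ≤ 0 := by
        have he : w * Complex.exp (((-b : ℝ) : ℂ) * I)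
            = ((‖w‖ : ℝ) : ℂ) * Complex.exp (((u.arg + a + -b : ℝ) : ℂ) * I) := by
          conv_lhs => rw [hrepw]
          rw [polar_mul_exp]
        rw [he, polar_im, show u.arg + a + -b = u.arg - (b - a) by ring] at him_b
        exact him_b
      have hsin : Real.sin (u.arg - (b - a)) ≤ 0 := by nlinarith
      rcases lt_or_eq_of_le (show u.arg - (b - a) ≤ Real.pi by linarith) with hlt | heq
      · have : 0 < Real.sin (u.arg - (b - a)) :=
          Real.sin_pos_of_pos_of_lt_pi (by linarith) hlt
        linarith
      · -- u.arg = π and b = a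
        have hbaeq : b = a := by linarith
        have hargπ : u.arg = Real.pi := by linarith
        have hureneg : u.re < 0 := (Complex.arg_eq_pi_iff.1 hargπ).1
        obtain ⟨t0, ht0, hct0⟩ : ∃ t0 ∈ S, c t0 ≠ 0 := by
          by_contra hall
          push_neg at hall
          exact hw0 (by rw [hw]; exact Finset.sum_eq_zero hall)
        have hpos : 0 < (w * Complex.exp (((-(a + b) / 2 : ℝ) : ℂ) * I)).re := by
          rw [hw, Finset.sum_mul, Complex.re_sum]
          exact Finset.sum_pos' hre ⟨t0, ht0, hrePos t0 ht0 hct0⟩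
        have hmid : (-(a + b) / 2 : ℝ) = -a := by rw [hbaeq]; ring
        rw [hmid, ← hu] at hpos
        linarith
    · intro habs0
      exact absurd habs0 (ne_of_gt habsw)




lemma mono_of_adjacent (r : ℕ) (f : ℕ → ℝ) (hadj : ∀ k, k + 1 < r → f k ≤ f (k + 1)) :
    ∀ i j, i ≤ j → j < r → f i ≤ f j := by
  intro i j hij hjr
  induction j with
  | zero => simp_all
  | succ j ih =>
    rcases Nat.lt_or_ge i (j + 1) with hlt | hge
    · exact le_trans (ih (by omega) (by omega)) (hadj j hjr)
    · have : i = j + 1 := by omega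
      rw [this]

section chain
variable (z : ℂ) (hz : 0 < z.im)

include hz in
lemma arg_facts : 0 < z.arg ∧ z.arg < Real.pi := by
  constructor
  · rcases lt_or_eq_of_le (Complex.arg_nonneg_iff.2 (le_of_lt hz)) with h | h
    · exact h
    · exfalso
      have := Complex.arg_eq_zero_iff.1 h.symm
      linarith [this.2]
  · rcases lt_or_eq_of_le (Complex.arg_le_pi z) with h | h
    · exact h
    · exfalso
      have := Complex.arg_eq_pi_iff.1 h
      linarith [this.2]

include hz in
lemma beta_facts : z.arg < (z - 1).arg ∧ (z - 1).arg ≤ Real.pi := by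
  have hz1 : 0 < (z - 1).im := by simp [Complex.sub_im, hz]
  have hb := arg_facts (z - 1) hz1
  have ha := arg_facts z hz
  refine ⟨?_, le_of_lt hb.2⟩
  have hcalc : ((z - 1) * (starRingEnd ℂ) z).im = z.im := by
    simp [Complex.mul_im, Complex.sub_re, Complex.sub_im, Complex.conj_re, Complex.conj_im]
    ring
  have hconj : (starRingEnd ℂ) z = ((‖z‖ : ℝ) : ℂ)
      * Complex.exp (((-z.arg : ℝ) : ℂ) * I) := by
    conv_lhs => rw [← Complex.norm_mul_exp_arg_mul_I z]
    rw [polar_conj]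
  have hz1' : z - 1 = ((‖z-1‖ : ℝ) : ℂ)
      * Complex.exp ((((z-1).arg : ℝ) : ℂ) * I) := (Complex.norm_mul_exp_arg_mul_I (z-1)).symm
  have hrep : (z - 1) * (starRingEnd ℂ) z
      = ((‖z - 1‖ * ‖z‖ : ℝ) : ℂ)
        * Complex.exp ((((z - 1).arg + -z.arg : ℝ) : ℂ) * I) := by
    conv_lhs => rw [hz1', hconj]
    rw [polar_mul]
  have him : 0 < ‖z - 1‖ * ‖z‖ * Real.sin ((z - 1).arg + -z.arg) := by
    rw [← polar_im, ← hrep, hcalc]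
    exact hz
  by_contra hle
  push_neg at hle
  have hs : Real.sin ((z - 1).arg + -z.arg) ≤ 0 := by
    rw [show (z-1).arg + -z.arg = -(z.arg - (z-1).arg) by ring, Real.sin_neg, neg_nonpos]
    exact Real.sin_nonneg_of_nonneg_of_le_pi (by linarith) (by linarith)
  have hAB : 0 ≤ ‖z - 1‖ * ‖z‖ :=
    mul_nonneg (norm_nonneg _) (norm_nonneg _)
  nlinarith [mul_nonpos_of_nonneg_of_nonpos hAB hs]

include hz in
lemma chain_step (r : ℕ) (hr : 1 ≤ r) (v : ℕ → ℂ) (θ : ℕ → ℝ)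
    (hmono : ∀ i j, i ≤ j → j < r → θ i ≤ θ j)
    (hwin : θ (r - 1) ≤ θ 0 + z.arg)
    (hrep : ∀ k, k < r → ∃ ρ : ℝ, 0 ≤ ρ ∧ v k = (ρ : ℂ) * Complex.exp ((θ k : ℂ) * I)) :
    ∃ θ' : ℕ → ℝ,
      (∀ i j, i ≤ j → j < r → θ' i ≤ θ' j) ∧
      θ' (r - 1) ≤ θ' 0 + z.arg ∧
      (∀ k, k < r → ∃ ρ : ℝ, 0 ≤ ρ ∧ Tr z r v k = (ρ : ℂ) * Complex.exp ((θ' k : ℂ) * I)) ∧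
      ((∃ i, i < r ∧ v i ≠ 0) → ∀ k, k < r → Tr z r v k ≠ 0) := by
  classical
  obtain ⟨hσ0, hσπ⟩ := arg_facts z hz
  obtain ⟨hβσ, hβπ⟩ := beta_facts z hz
  set σ := z.arg with hσdef
  set β := (z - 1).arg with hβdef
  by_cases hall : ∀ i, i < r → v i = 0
  · refine ⟨θ, hmono, by linarith, fun k hk => ⟨0, le_rfl, ?_⟩, ?_⟩
    · have hTr0 : Tr z r v k = 0 := by
        unfold Tr
        rw [Finset.sum_eq_zero fun i hi => hall i (Finset.mem_Ico.1 hi).2,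
          Finset.sum_eq_zero fun i hi =>
            hall i (lt_of_lt_of_le (Finset.mem_range.1 hi) (le_of_lt hk)),
          mul_zero, add_zero]
      rw [hTr0]; simp
    · intro hex
      obtain ⟨i, hi, hne⟩ := hex
      exact absurd (hall i hi) hne
  · push_neg at hall
    obtain ⟨i0, hi0r, hi0⟩ := hall
    have hzne : z ≠ 0 := fun hzz => by rw [hzz] at hz; simp at hz
    have hzrep : z = ((‖z‖ : ℝ) : ℂ) * Complex.exp ((σ : ℝ) * I) :=
      (Complex.norm_mul_exp_arg_mul_I z).symm
    have hz1rep : z - 1 = ((‖z-1‖ : ℝ) : ℂ) * Complex.exp ((β : ℝ) * I) :=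
      (Complex.norm_mul_exp_arg_mul_I (z-1)).symm
    have habsz : 0 < ‖z‖ := norm_pos_iff.2 hzne
    have main : ∀ k, ∃ P : ℝ, ∃ φ : ℝ, k < r →
        0 < P ∧ θ k ≤ φ ∧ φ ≤ θ k + σ ∧
        Tr z r v k = (P : ℂ) * Complex.exp ((φ : ℝ) * I) := by
      intro k
      by_cases hk : k < r
      · obtain ⟨b, hbk, hbσ, hblo, hbhi⟩ :
            ∃ b : ℝ, θ k ≤ b ∧ b ≤ θ k + σ ∧ (∀ t, t < k → θ t + σ ≤ b) ∧
              (∀ t, k ≤ t → t < r → θ t ≤ b) := by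
          by_cases hk0 : k = 0
          · subst hk0
            exact ⟨θ (r-1), hmono 0 (r-1) (by omega) (by omega), by linarith,
              fun t ht => (Nat.not_lt_zero t ht).elim,
              fun t h1 h2 => hmono t (r-1) (by omega) (by omega)⟩
          · refine ⟨θ (k-1) + σ, ?_, ?_, ?_, ?_⟩
            · have h2 : θ k ≤ θ (r-1) := hmono k (r-1) (by omega) (by omega)
              have h4 : θ 0 ≤ θ (k-1) := hmono 0 (k-1) (by omega) (by omega)
              linarith [hwin]
            · have := hmono (k-1) k (by omega) hk
              linarith
            · intro t ht
              have := hmono t (k-1) (by omega) (by omega)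
              linarith
            · intro t h1 h2
              have h3 : θ t ≤ θ (r-1) := hmono t (r-1) (by omega) (by omega)
              have h4 : θ 0 ≤ θ (k-1) := hmono 0 (k-1) (by omega) (by omega)
              linarith [hwin]
        have hmem : ∀ t ∈ Finset.range r, ∃ ρ : ℝ, 0 ≤ ρ ∧ ∃ φ : ℝ, θ k ≤ φ ∧ φ ≤ b ∧
            (if t < k then z * v t else v t) = (ρ : ℂ) * Complex.exp ((φ : ℝ) * I) := by
          intro t ht
          have htr := Finset.mem_range.1 ht
          obtain ⟨ρ, hρ, hrept⟩ := hrep t htr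
          by_cases htk : t < k
          · refine ⟨‖z‖ * ρ, mul_nonneg (le_of_lt habsz) hρ, θ t + σ, ?_, hblo t htk, ?_⟩
            · have h5 : θ k ≤ θ (r-1) := hmono k (r-1) (by omega) (by omega)
              have h0t : θ 0 ≤ θ t := hmono 0 t (by omega) htr
              linarith [hwin]
            · rw [if_pos htk, hrept]
              conv_lhs => rw [hzrep]
              rw [polar_mul]
              norm_num [add_comm]
          · push_neg at htk
            exact ⟨ρ, hρ, θ t, hmono k t htk htr, hbhi t htk htr,
              by rw [if_neg (by omega)]; exact hrept⟩
        obtain ⟨P, hP, φ, hφ1, hφ2, hrepT, hzero⟩ :=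
          sector_sum (Finset.range r) (fun i => if i < k then z * v i else v i)
            (θ k) b hbk (by linarith) hmem
        have hTr : Tr z r v k = ∑ i ∈ Finset.range r, (if i < k then z * v i else v i) := by
          have h1 : ∑ i ∈ Finset.Ico 0 k, (if i < k then z * v i else v i)
              = z * ∑ i ∈ Finset.range k, v i := by
            rw [Finset.mul_sum, ← Finset.range_eq_Ico]
            exact Finset.sum_congr rfl fun i hi => if_pos (Finset.mem_range.1 hi)
          have h2 : ∑ i ∈ Finset.Ico k r, (if i < k then z * v i else v i)
              = ∑ i ∈ Finset.Ico k r, v i :=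
            Finset.sum_congr rfl fun i hi => if_neg (by push_neg; exact (Finset.mem_Ico.1 hi).1)
          unfold Tr
          conv_rhs => rw [Finset.range_eq_Ico,
            ← Finset.sum_Ico_consecutive (fun i => if i < k then z * v i else v i)
              (Nat.zero_le k) (le_of_lt hk)]
          rw [h1, h2]
          exact add_comm _ _
        have hPne : P ≠ 0 := by
          intro hP0
          have hall0 := hzero hP0
          have := hall0 i0 (Finset.mem_range.2 hi0r)
          by_cases hik : i0 < k
          · rw [if_pos hik] at this
            exact hi0 ((mul_eq_zero.1 this).resolve_left hzne)
          · rw [if_neg hik] at this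
            exact hi0 this
        exact ⟨P, φ, fun _ => ⟨lt_of_le_of_ne hP (Ne.symm hPne), hφ1, by linarith,
          by rw [hTr, hrepT]⟩⟩
      · exact ⟨1, 0, fun hc => absurd hc hk⟩
    choose Pf φf hPφ using main
    -- adjacent relation
    have hstep : ∀ k, k + 1 < r → Tr z r v (k+1) = Tr z r v k + (z - 1) * v k := by
      intro k hk1
      unfold Tr
      rw [Finset.sum_eq_sum_Ico_succ_bot (by omega : k < r) v, Finset.sum_range_succ]
      ring
    -- key: sin of adjacent difference is nonneg
    have hadj : ∀ k, k + 1 < r → φf k ≤ φf (k+1) := by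
      intro k hk1
      obtain ⟨hP0, hθφ0, hφσ0, hT0⟩ := hPφ k (by omega)
      obtain ⟨hP1, hθφ1, hφσ1, hT1⟩ := hPφ (k+1) hk1
      obtain ⟨ρ, hρ, hrepk⟩ := hrep k (by omega)
      have e1 : Tr z r v (k+1) * (starRingEnd ℂ) (Tr z r v k)
          = Tr z r v k * (starRingEnd ℂ) (Tr z r v k)
            + (z - 1) * v k * (starRingEnd ℂ) (Tr z r v k) := by
        rw [hstep k hk1]; ring
      have eL : (Tr z r v (k+1) * (starRingEnd ℂ) (Tr z r v k)).im
          = Pf (k+1) * Pf k * Real.sin (φf (k+1) + -φf k) := by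
        rw [hT1, hT0, polar_conj, polar_mul, polar_im]
      have eR1 : (Tr z r v k * (starRingEnd ℂ) (Tr z r v k)).im = 0 := by
        rw [Complex.mul_conj]
        simp
      have eR2 : ((z - 1) * v k * (starRingEnd ℂ) (Tr z r v k)).im
          = ‖z-1‖ * ρ * Pf k * Real.sin (β + θ k + -φf k) := by
        conv_lhs => rw [hrepk, hT0, hz1rep]
        rw [polar_conj, polar_mul, polar_mul, polar_im]
      have hsin2 : 0 ≤ Real.sin (β + θ k + -φf k) := by
        refine Real.sin_nonneg_of_nonneg_of_le_pi (by linarith) (by linarith)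
      have him : 0 ≤ Pf (k+1) * Pf k * Real.sin (φf (k+1) + -φf k) := by
        rw [← eL]
        have := congrArg Complex.im e1
        rw [Complex.add_im, eR1, eR2, zero_add] at this
        rw [this]
        have habs1 : (0:ℝ) ≤ ‖z-1‖ := norm_nonneg _
        positivity
      have hsinΔ : 0 ≤ Real.sin (φf (k+1) + -φf k) := by
        have hPP : 0 < Pf (k+1) * Pf k := mul_pos hP1 hP0
        nlinarith
      by_contra hlt
      push_neg at hlt
      have hθmono : θ k ≤ θ (k+1) := hmono k (k+1) (by omega) hk1
      have hd1 : φf k - φf (k+1) < Real.pi := by linarith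
      have hspos : 0 < Real.sin (φf k - φf (k+1)) :=
        Real.sin_pos_of_pos_of_lt_pi (by linarith) hd1
      have hneg : Real.sin (φf (k+1) + -φf k) < 0 := by
        rw [show φf (k+1) + -φf k = -(φf k - φf (k+1)) by ring, Real.sin_neg]
        linarith
      linarith
    have hmono' : ∀ i j, i ≤ j → j < r → φf i ≤ φf j := mono_of_adjacent r φf hadj
    have hwin' : φf (r - 1) ≤ φf 0 + σ := by
      rcases Nat.lt_or_ge 1 r with hr2 | hr1
      · obtain ⟨hP0, hθφ0, hφσ0, hT0⟩ := hPφ 0 (by omega)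
        obtain ⟨hPr, hθφr, hφσr, hTrr⟩ := hPφ (r-1) (by omega)
        obtain ⟨ρ, hρ, hrepk⟩ := hrep (r-1) (by omega)
        have hsplit : ∑ i ∈ Finset.range r, v i
            = ∑ i ∈ Finset.range (r-1), v i + v (r-1) := by
          conv_lhs => rw [show r = (r-1)+1 by omega]
          rw [Finset.sum_range_succ]
        have e2 : z * Tr z r v 0 = Tr z r v (r-1) + (z - 1) * v (r-1) := by
          unfold Tr
          rw [Finset.sum_eq_sum_Ico_succ_bot (by omega : r - 1 < r) v,
            show r - 1 + 1 = r by omega, Finset.Ico_self, Finset.sum_empty, add_zero,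
            Finset.range_zero, Finset.sum_empty, mul_zero, add_zero,
            ← Finset.range_eq_Ico, hsplit]
          ring
        have e3 : z * Tr z r v 0 * (starRingEnd ℂ) (Tr z r v (r-1))
            = Tr z r v (r-1) * (starRingEnd ℂ) (Tr z r v (r-1))
              + (z - 1) * v (r-1) * (starRingEnd ℂ) (Tr z r v (r-1)) := by
          rw [e2]; ring
        have eL : (z * Tr z r v 0 * (starRingEnd ℂ) (Tr z r v (r-1))).im
            = ‖z‖ * Pf 0 * Pf (r-1) * Real.sin (σ + φf 0 + -φf (r-1)) := by
          conv_lhs => rw [hT0, hTrr, hzrep]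
          rw [polar_conj, polar_mul, polar_mul, polar_im]
        have eR1 : (Tr z r v (r-1) * (starRingEnd ℂ) (Tr z r v (r-1))).im = 0 := by
          rw [Complex.mul_conj]; simp
        have eR2 : ((z - 1) * v (r-1) * (starRingEnd ℂ) (Tr z r v (r-1))).im
            = ‖z-1‖ * ρ * Pf (r-1) * Real.sin (β + θ (r-1) + -φf (r-1)) := by
          conv_lhs => rw [hrepk, hTrr, hz1rep]
          rw [polar_conj, polar_mul, polar_mul, polar_im]

        have hsin2 : 0 ≤ Real.sin (β + θ (r-1) + -φf (r-1)) :=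
          Real.sin_nonneg_of_nonneg_of_le_pi (by linarith) (by linarith)
        have him : 0 ≤ ‖z‖ * Pf 0 * Pf (r-1) * Real.sin (σ + φf 0 + -φf (r-1)) := by
          rw [← eL]
          have := congrArg Complex.im e3
          rw [Complex.add_im, eR1, eR2, zero_add] at this
          rw [this]
          have habs1 : (0:ℝ) ≤ ‖z-1‖ := norm_nonneg _
          positivity
        have hsinx : 0 ≤ Real.sin (σ + φf 0 + -φf (r-1)) := by
          have hPP : 0 < ‖z‖ * Pf 0 * Pf (r-1) := by positivity
          nlinarith
        by_contra hlt
        push_neg at hlt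
        have hθ1 : θ 0 ≤ φf 0 := hθφ0
        have hθ2 : φf (r-1) ≤ θ (r-1) + σ := hφσr
        have hd1 : φf (r-1) - (σ + φf 0) < Real.pi := by linarith [hwin]
        have hspos : 0 < Real.sin (φf (r-1) - (σ + φf 0)) :=
          Real.sin_pos_of_pos_of_lt_pi (by linarith) hd1
        have hneg : Real.sin (σ + φf 0 + -φf (r-1)) < 0 := by
          rw [show σ + φf 0 + -φf (r-1) = -(φf (r-1) - (σ + φf 0)) by ring, Real.sin_neg]
          linarith
        linarith
      · have : r - 1 = 0 := by omega
        rw [this]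
        linarith
    refine ⟨φf, hmono', hwin', fun k hk => ?_, fun _ k hk => ?_⟩
    · obtain ⟨hP, h1, h2, hT⟩ := hPφ k hk
      exact ⟨Pf k, le_of_lt hP, hT⟩
    · obtain ⟨hP, h1, h2, hT⟩ := hPφ k hk
      rw [hT]
      exact mul_ne_zero (by exact_mod_cast ne_of_gt hP) (Complex.exp_ne_zero _)

end chain



section base
variable (z : ℂ) (hz : 0 < z.im)

include hz in
lemma pairPhase (a b : ℝ) (ha : 0 ≤ a) (hb : 0 ≤ b)
    (hw : (a : ℂ) + (b : ℂ) * z ≠ 0) :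
    0 ≤ ((a : ℂ) + (b : ℂ) * z).arg ∧ ((a : ℂ) + (b : ℂ) * z).arg ≤ z.arg := by
  obtain ⟨hσ0, hσπ⟩ := arg_facts z hz
  set w := (a : ℂ) + (b : ℂ) * z with hwdef
  have him : 0 ≤ w.im := by
    rw [hwdef]
    simp [Complex.add_im, Complex.mul_im]
    positivity
  have harg0 : 0 ≤ w.arg := Complex.arg_nonneg_iff.2 him
  have hargπ : w.arg ≤ Real.pi := Complex.arg_le_pi w
  refine ⟨harg0, ?_⟩
  have hzne : z ≠ 0 := fun hzz => by rw [hzz] at hz; simp at hz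
  have habsz : 0 < ‖z‖ := norm_pos_iff.2 hzne
  have habsw : 0 < ‖w‖ := norm_pos_iff.2 hw
  have hcalc : (z * (starRingEnd ℂ) w).im = a * z.im := by
    rw [hwdef]
    simp [Complex.mul_im, Complex.add_re, Complex.add_im, Complex.mul_re,
      Complex.conj_re, Complex.conj_im, Complex.ofReal_re, Complex.ofReal_im]
    ring
  have hrep : z * (starRingEnd ℂ) w
      = ((‖z‖ * ‖w‖ : ℝ) : ℂ)
        * Complex.exp (((z.arg + -w.arg : ℝ) : ℂ) * I) := by
    conv_lhs => rw [← Complex.norm_mul_exp_arg_mul_I w]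
    rw [polar_conj]
    conv_lhs => rw [← Complex.norm_mul_exp_arg_mul_I z]
    rw [polar_mul]
  have hsin : 0 ≤ Real.sin (z.arg + -w.arg) := by
    have h1 : 0 ≤ (z * (starRingEnd ℂ) w).im := by
      rw [hcalc]; positivity
    rw [hrep, polar_im] at h1
    nlinarith [mul_pos habsz habsw]
  by_contra hgt
  push_neg at hgt
  have h2 : 0 < Real.sin (w.arg - z.arg) :=
    Real.sin_pos_of_pos_of_lt_pi (by linarith) (by linarith)
  rw [show z.arg + -w.arg = -(w.arg - z.arg) by ring, Real.sin_neg] at hsin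
  linarith

include hz in
lemma pairMono (a b c e : ℝ) (ha : 0 ≤ a) (hb : 0 ≤ b) (hc : 0 ≤ c) (he : 0 ≤ e)
    (hcross : a * e ≤ b * c)
    (hu : (a : ℂ) + (c : ℂ) * z ≠ 0) (hv : (b : ℂ) + (e : ℂ) * z ≠ 0) :
    ((b : ℂ) + (e : ℂ) * z).arg ≤ ((a : ℂ) + (c : ℂ) * z).arg := by
  obtain ⟨hσ0, hσπ⟩ := arg_facts z hz
  set wu := (a : ℂ) + (c : ℂ) * z with hwu
  set wv := (b : ℂ) + (e : ℂ) * z with hwv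
  obtain ⟨hu0, huσ⟩ := pairPhase z hz a c ha hc hu
  obtain ⟨hv0, hvσ⟩ := pairPhase z hz b e hb he hv
  have habsu : 0 < ‖wu‖ := norm_pos_iff.2 hu
  have habsv : 0 < ‖wv‖ := norm_pos_iff.2 hv
  have hcalc : (wu * (starRingEnd ℂ) wv).im = (c * b - a * e) * z.im := by
    rw [hwu, hwv]
    simp [Complex.mul_im, Complex.add_re, Complex.add_im, Complex.mul_re,
      Complex.conj_re, Complex.conj_im, Complex.ofReal_re, Complex.ofReal_im]
    ring
  have hrep : wu * (starRingEnd ℂ) wv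
      = ((‖wu‖ * ‖wv‖ : ℝ) : ℂ)
        * Complex.exp (((wu.arg + -wv.arg : ℝ) : ℂ) * I) := by
    conv_lhs => rw [← Complex.norm_mul_exp_arg_mul_I wv]
    rw [polar_conj]
    conv_lhs => rw [← Complex.norm_mul_exp_arg_mul_I wu]
    rw [polar_mul]
  have hsin : 0 ≤ Real.sin (wu.arg + -wv.arg) := by
    have h1 : 0 ≤ (wu * (starRingEnd ℂ) wv).im := by
      rw [hcalc]
      have : 0 ≤ c * b - a * e := by nlinarith
      positivity
    rw [hrep, polar_im] at h1
    nlinarith [mul_pos habsu habsv]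
  by_contra hgt
  push_neg at hgt
  have h2 : 0 < Real.sin (wv.arg - wu.arg) :=
    Real.sin_pos_of_pos_of_lt_pi (by linarith) (by linarith)
  rw [show wu.arg + -wv.arg = -(wv.arg - wu.arg) by ring, Real.sin_neg] at hsin
  linarith

include hz in
lemma base_chain (r : ℕ) (hr : 1 ≤ r) (htl : ℝ[X])
    (hcf : ∀ m, 0 ≤ htl.coeff m)
    (cross : ∀ u v : ℕ, u ≤ v →
      htl.coeff (v + r) * htl.coeff u ≤ htl.coeff v * htl.coeff (u + r))
    (v : ℕ → ℂ)
    (hv0 : v 0 = ((htl.coeff 0 : ℝ) : ℂ) + ((htl.coeff r : ℝ) : ℂ) * z)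
    (hvk : ∀ k, 1 ≤ k → k < r →
      v k = z * (((htl.coeff (r - k) : ℝ) : ℂ) + ((htl.coeff (2 * r - k) : ℝ) : ℂ) * z)) :
    ∃ θ : ℕ → ℝ,
      (∀ i j, i ≤ j → j < r → θ i ≤ θ j) ∧
      θ (r - 1) ≤ θ 0 + z.arg ∧
      (∀ k, k < r → ∃ ρ : ℝ, 0 ≤ ρ ∧ v k = (ρ : ℂ) * Complex.exp ((θ k : ℂ) * I)) := by
  classical
  obtain ⟨hσ0, hσπ⟩ := arg_facts z hz
  set σ := z.arg with hσdef
  set W : ℕ → ℂ := fun u => ((htl.coeff u : ℝ) : ℂ) + ((htl.coeff (u + r) : ℝ) : ℂ) * z with hW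
  have hWmono : ∀ u u', u ≤ u' → W u ≠ 0 → W u' ≠ 0 → (W u').arg ≤ (W u).arg := by
    intro u u' huu hu hu'
    exact pairMono z hz (htl.coeff u) (htl.coeff u') (htl.coeff (u + r)) (htl.coeff (u' + r))
      (hcf u) (hcf u') (hcf (u + r)) (hcf (u' + r)) (by
        have := cross u u' huu
        nlinarith [this]) hu hu'
  have hWphase : ∀ u, W u ≠ 0 → 0 ≤ (W u).arg ∧ (W u).arg ≤ σ := by
    intro u hu
    exact pairPhase z hz (htl.coeff u) (htl.coeff (u + r)) (hcf u) (hcf (u + r)) hu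
  -- recursive ψ
  let ψ : ℕ → ℝ := fun k => Nat.rec (0 : ℝ)
    (fun n ih => if W (r - (n + 1)) = 0 then ih else (W (r - (n + 1))).arg) k
  have hψ0 : ψ 0 = 0 := rfl
  have hψsucc : ∀ n, ψ (n + 1) = if W (r - (n + 1)) = 0 then ψ n else (W (r - (n + 1))).arg := by
    intro n; rfl
  have hInv : ∀ k, 0 ≤ ψ k ∧ ψ k ≤ σ ∧
      (∀ u, u + k ≤ r → W u ≠ 0 → ψ k ≤ (W u).arg) := by
    intro k
    induction k with
    | zero => exact ⟨le_rfl, le_of_lt hσ0, fun u _ hu => (hWphase u hu).1⟩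
    | succ n ih =>
      rw [hψsucc]
      by_cases h0 : W (r - (n + 1)) = 0
      · rw [if_pos h0]
        exact ⟨ih.1, ih.2.1, fun u hu hne => ih.2.2 u (by omega) hne⟩
      · rw [if_neg h0]
        refine ⟨(hWphase _ h0).1, (hWphase _ h0).2, fun u hu hne => ?_⟩
        exact hWmono u (r - (n+1)) (by omega) hne h0
  have hψadj : ∀ n, n + 1 < r → ψ n ≤ ψ (n + 1) := by
    intro n hn
    rw [hψsucc]
    by_cases h0 : W (r - (n + 1)) = 0
    · rw [if_pos h0]
    · rw [if_neg h0]
      exact (hInv n).2.2 (r - (n+1)) (by omega) h0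
  have hψmono : ∀ i j, i ≤ j → j < r → ψ i ≤ ψ j := mono_of_adjacent r ψ hψadj
  -- θ0
  set θ0 : ℝ := if W 0 = 0 then σ else (W 0).arg with hθ0def
  have hθ0σ : 0 ≤ θ0 ∧ θ0 ≤ σ := by
    rw [hθ0def]
    by_cases h0 : W 0 = 0
    · rw [if_pos h0]; exact ⟨le_of_lt hσ0, le_rfl⟩
    · rw [if_neg h0]; exact hWphase 0 h0
  have hψwin : ψ (r - 1) ≤ θ0 := by
    rw [hθ0def]
    by_cases h0 : W 0 = 0
    · rw [if_pos h0]; exact (hInv (r-1)).2.1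
    · rw [if_neg h0]
      exact (hInv (r-1)).2.2 0 (by omega) h0
  refine ⟨fun k => if k = 0 then θ0 else σ + ψ k, ?_, ?_, ?_⟩
  · intro i j hij hjr
    dsimp only
    by_cases hi0 : i = 0
    · subst hi0
      by_cases hj0 : j = 0
      · subst hj0; exact le_rfl
      · rw [if_pos rfl, if_neg hj0]
        have := (hInv j).1
        linarith [hθ0σ.2]
    · have hj0 : j ≠ 0 := by omega
      rw [if_neg hi0, if_neg hj0]
      have := hψmono i j hij hjr
      linarith
  · dsimp only
    by_cases hr1 : r = 1
    · subst hr1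
      simp only [Nat.sub_self, if_pos rfl]
      linarith
    · rw [if_neg (by omega : ¬ (r - 1 = 0)), if_pos rfl]
      linarith [hψwin]
  · intro k hk
    dsimp only
    by_cases hk0 : k = 0
    · subst hk0
      rw [if_pos rfl, hv0]
      by_cases h0 : W 0 = 0
      · refine ⟨0, le_rfl, ?_⟩
        have : ((htl.coeff 0 : ℝ) : ℂ) + ((htl.coeff r : ℝ) : ℂ) * z = W 0 := by
          rw [hW]; norm_num
        rw [this, h0]
        simp
      · refine ⟨‖W 0‖, norm_nonneg _, ?_⟩
        have : ((htl.coeff 0 : ℝ) : ℂ) + ((htl.coeff r : ℝ) : ℂ) * z = W 0 := by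
          rw [hW]; norm_num
        rw [this, hθ0def, if_neg h0, Complex.norm_mul_exp_arg_mul_I]
    · -- k ≥ 1
      rw [if_neg hk0, hvk k (by omega) hk]
      have hidx : 2 * r - k = r - k + r := by omega
      have hWk : ((htl.coeff (r - k) : ℝ) : ℂ) + ((htl.coeff (2 * r - k) : ℝ) : ℂ) * z
          = W (r - k) := by
        simp only [hW, hidx]
      rw [hWk]
      have hψk : ψ k = if W (r - k) = 0 then ψ (k-1) else (W (r - k)).arg := by
        conv_lhs => rw [show k = (k-1) + 1 by omega]
        rw [hψsucc]
        congr 2 <;> (congr 1; omega)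
      by_cases h0 : W (r - k) = 0
      · refine ⟨0, le_rfl, ?_⟩
        rw [h0, mul_zero]
        simp
      · refine ⟨‖z‖ * ‖W (r - k)‖,
          mul_nonneg (norm_nonneg _) (norm_nonneg _), ?_⟩
        conv_lhs => rw [← Complex.norm_mul_exp_arg_mul_I z,
          ← Complex.norm_mul_exp_arg_mul_I (W (r-k))]
        rw [polar_mul, hψk, if_neg h0]

end base
end St7

namespace St7

section glue
variable (d s : ℕ) (h : ℝ[X])

/-- coefficients of `pt` agree with those of `htilde * g^d` at multiples of `r`. -/
lemma pt_coeff_eq (r : ℕ) (hr : 1 ≤ r) (hd : h.natDegree ≤ d)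
    (hyp : ∀ j, j ≤ d → 2 * j ≤ d + 1 ∨ h.coeff j = 0)
    (pt qt : ℝ[X]) (hpq : IsSymmDecomp d (Uop r (d + 1) h) pt qt) (n : ℕ) :
    pt.coeff n = coeffZ (htilde d h * geomPoly r ^ d) ((r : ℤ) * n) := by
  obtain ⟨hU, hpd, hps, hqd, hqs⟩ := hpq
  have hu : ∀ i : ℕ, (Uop r (d+1) h).coeff i
      = coeffZ (h * geomPoly r ^ (d + 1)) ((r : ℤ) * i) := fun i => Uop_coeff r h (d+1) i hr
  have huc : ∀ i : ℕ, (Uop r (d+1) h).coeff i = pt.coeff i + (X * qt).coeff i := by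
    intro i; rw [hU, Polynomial.coeff_add]
  rcases le_or_gt n d with hn | hn
  · -- induction up to d
    induction n with
    | zero =>
      have h0 : (Uop r (d+1) h).coeff 0 = pt.coeff 0 := by
        rw [huc 0, Polynomial.mul_coeff_zero, Polynomial.coeff_X_zero, zero_mul, add_zero]
      have hBB := BB_zero d r h hd hyp hr
      rw [← h0, hu 0]
      push_cast
      rw [mul_zero]
      exact hBB.symm
    | succ n ih =>
      have ihn := ih (by omega)
      -- recurrence for pt
      have e1 : (Uop r (d+1) h).coeff (n+1) = pt.coeff (n+1) + qt.coeff n := by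
        rw [huc (n+1), Polynomial.coeff_X_mul]
      have hidx : d + 1 - (n + 1) = (d - n - 1) + 1 := by omega
      have e2 : (Uop r (d+1) h).coeff (d + 1 - (n+1)) = pt.coeff n + qt.coeff n := by
        rw [huc _, hidx, Polynomial.coeff_X_mul]
        congr 1
        · have := hps (d - n) (by omega)
          rw [show (d - n - 1) + 1 = d - n by omega, this, show d - (d - n) = n by omega]
        · have := hqs (d - n - 1) (by omega)
          rw [this, show d - 1 - (d - n - 1) = n by omega]
      have hrec := BB_rec d r h hd hyp (n+1) (by omega) (by omega)
      have harith1 : ((r : ℤ) * ((n+1 : ℕ) : ℤ) - r) = (r : ℤ) * (((n+1 : ℕ) : ℤ) - 1) := by ring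
      -- translate
      have hQ1 : (Uop r (d+1) h).coeff (n+1)
          = coeffZ (h * geomPoly r ^ (d+1)) ((r : ℤ) * ((n+1 : ℕ) : ℤ)) := hu (n+1)
      have hQ2 : (Uop r (d+1) h).coeff (d + 1 - (n+1))
          = coeffZ (h * geomPoly r ^ (d+1)) ((r : ℤ) * ((d : ℤ) + 1 - ((n+1 : ℕ) : ℤ))) := by
        rw [hu (d + 1 - (n+1))]
        congr 2
        push_cast
        omega
      have e3 : pt.coeff (n+1) - pt.coeff n
          = coeffZ (h * geomPoly r ^ (d+1)) ((r : ℤ) * ((n+1 : ℕ) : ℤ))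
            - coeffZ (h * geomPoly r ^ (d+1)) ((r : ℤ) * ((d : ℤ) + 1 - ((n+1 : ℕ) : ℤ))) := by
        rw [← hQ1, ← hQ2, e1, e2]
        ring
      have e4 : coeffZ (htilde d h * geomPoly r ^ d) ((r : ℤ) * ((n+1 : ℕ) : ℤ))
          - coeffZ (htilde d h * geomPoly r ^ d) ((r : ℤ) * (n : ℕ)) = pt.coeff (n+1) - pt.coeff n := by
        rw [e3, ← hrec]
        congr 2
        push_cast
        ring
      have := e4
      rw [← ihn] at this
      linarith [this]
  · -- beyond degree d
    have h1 : pt.coeff n = 0 :=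
      Polynomial.coeff_eq_zero_of_natDegree_lt (by omega)
    have h2 : coeffZ (htilde d h * geomPoly r ^ d) ((r : ℤ) * n) = 0 := by
      refine coeffZ_mul_geom_pow_eq_zero _ r d ?_
      have h3 : ((htilde d h).natDegree : ℤ) ≤ d := by exact_mod_cast htilde_natDegree d h
      have h4 : ((r - 1 : ℕ) : ℤ) = (r : ℤ) - 1 := by omega
      have h5 : (r : ℤ) * ((d : ℤ) + 1) ≤ (r : ℤ) * n := by
        apply mul_le_mul_of_nonneg_left _ (by positivity)
        exact_mod_cast (by omega : d + 1 ≤ n)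
      rw [h4]
      nlinarith [h5]
    rw [h1, h2]

end glue
end St7


/-- If `h` has degree `s ≤ d`, nonnegative coefficients, satisfies
Property (H), and `2s ≤ d+1`, then the first part `p̃` of the symmetric decomposition of
`U_r^{d+1} h` is real-rooted for every `r` with `2r ≥ d+1`. -/
theorem statement7 (d s : ℕ) (h : ℝ[X]) (hne : h ≠ 0) (hdeg : h.natDegree = s)
    (hsd : s ≤ d) (hnn : ∀ i, 0 ≤ h.coeff i) (hH : PropH d h) (hsmall : 2 * s ≤ d + 1)
    (r : ℕ) (hr : d + 1 ≤ 2 * r)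
    (pt qt : ℝ[X]) (hpq : IsSymmDecomp d (Uop r (d + 1) h) pt qt) :
    RealRooted pt := by
  classical
  have hr1 : 1 ≤ r := by omega
  have hd : h.natDegree ≤ d := by omega
  have hyp : ∀ j, j ≤ d → 2 * j ≤ d + 1 ∨ h.coeff j = 0 := by
    intro j hj
    rcases le_or_gt j s with hjs | hjs
    · left; omega
    · right; exact Polynomial.coeff_eq_zero_of_natDegree_lt (by omega)
  set htl := St7.htilde d h with hhtl
  have hdtl : htl.natDegree ≤ d := St7.htilde_natDegree d h
  have hcf : ∀ m, 0 ≤ htl.coeff m := St7.htilde_coeff_nonneg d h hnn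
  have hptc : ∀ n : ℕ, pt.coeff n = coeffZ (htl * geomPoly r ^ d) ((r : ℤ) * n) :=
    St7.pt_coeff_eq d h r hr1 hd hyp pt qt hpq
  -- pt = Fp htl r d 0
  have hptF : pt = St7.Fp htl r d 0 := by
    refine Polynomial.ext fun n => ?_
    rw [hptc n, St7.Fp_coeff htl r (by omega) d 0 n (by omega)]
    norm_num
  by_cases htl0 : htl = 0
  · left
    refine Polynomial.ext fun n => ?_
    rw [hptc n, htl0, zero_mul, St7.coeffZ_zero, Polynomial.coeff_zero]
  · right
    -- key claim: no roots in the open upper half-plane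
    have key : ∀ z : ℂ, 0 < z.im → (Polynomial.aeval z) pt ≠ 0 := by
      intro z hz
      have hzne : z ≠ 0 := fun hzz => by rw [hzz] at hz; simp at hz
      -- evaluations of the base family
      have hev0 : ∀ k : ℕ, (Polynomial.aeval z) (St7.Fp htl r 0 k)
          = ((coeffZ htl ((r:ℤ)*0 - k) : ℝ) : ℂ)
            + ((coeffZ htl ((r:ℤ)*1 - k) : ℝ) : ℂ) * z
            + ((coeffZ htl ((r:ℤ)*2 - k) : ℝ) : ℂ) * z ^ 2 := by
        intro k
        show (Polynomial.aeval z)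
            (∑ n ∈ Finset.range 3, Polynomial.C (coeffZ htl ((r : ℤ) * n - k)) * Polynomial.X ^ n)
          = _
        rw [map_sum]
        simp only [map_mul, Polynomial.aeval_C, map_pow, Polynomial.aeval_X,
          Complex.coe_algebraMap]
        rw [Finset.sum_range_succ, Finset.sum_range_succ, Finset.sum_range_succ,
          Finset.sum_range_zero]
        push_cast
        ring
      have hvz0 : (Polynomial.aeval z) (St7.Fp htl r 0 0)
          = ((htl.coeff 0 : ℝ) : ℂ) + ((htl.coeff r : ℝ) : ℂ) * z := by
        rw [hev0 0]
        have e0 : (r:ℤ)*0 - ((0:ℕ):ℤ) = ((0:ℕ):ℤ) := by push_cast; ring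
        have e1 : (r:ℤ)*1 - ((0:ℕ):ℤ) = ((r:ℕ):ℤ) := by push_cast; ring
        have e2 : (r:ℤ)*2 - ((0:ℕ):ℤ) = ((2*r:ℕ):ℤ) := by push_cast; ring
        rw [e0, e1, e2, St7.coeffZ_natCast, St7.coeffZ_natCast, St7.coeffZ_natCast,
          (by exact Polynomial.coeff_eq_zero_of_natDegree_lt (by omega) : htl.coeff (2*r) = 0)]
        push_cast
        ring
      have hvzk : ∀ k, 1 ≤ k → k < r → (Polynomial.aeval z) (St7.Fp htl r 0 k)
          = z * (((htl.coeff (r - k) : ℝ) : ℂ) + ((htl.coeff (2 * r - k) : ℝ) : ℂ) * z) := by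
        intro k h1k hkr
        rw [hev0 k]
        have h0 : coeffZ htl ((r:ℤ)*0 - k) = 0 := St7.coeffZ_neg htl (by omega)
        have h1 : coeffZ htl ((r:ℤ)*1 - k) = htl.coeff (r - k) := by
          rw [show (r:ℤ)*1 - k = ((r - k : ℕ) : ℤ) by push_cast [Nat.cast_sub (le_of_lt hkr)]; ring,
            St7.coeffZ_natCast]
        have h2 : coeffZ htl ((r:ℤ)*2 - k) = htl.coeff (2 * r - k) := by
          rw [show (r:ℤ)*2 - k = ((2 * r - k : ℕ) : ℤ) by
            push_cast [Nat.cast_sub (by omega : k ≤ 2 * r)]; ring, St7.coeffZ_natCast]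
        rw [h0, h1, h2]
        push_cast
        ring
      -- the transform recurrence under evaluation
      have hevrec : ∀ m k, (Polynomial.aeval z) (St7.Fp htl r (m+1) k)
          = St7.Tr z r (fun i => (Polynomial.aeval z) (St7.Fp htl r m i)) k := by
        intro m k
        show (Polynomial.aeval z) ((∑ i ∈ Finset.Ico k r, St7.Fp htl r m i)
            + Polynomial.X * ∑ i ∈ Finset.range k, St7.Fp htl r m i) = _
        rw [map_add, map_sum, map_mul, Polynomial.aeval_X, map_sum]
        rfl
      -- the base family is not identically zero
      have pair_zero : ∀ a b : ℝ, ((a : ℝ) : ℂ) + ((b : ℝ) : ℂ) * z = 0 → a = 0 ∧ b = 0 := by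
        intro a b hab
        have him := congrArg Complex.im hab
        simp only [Complex.add_im, Complex.mul_im, Complex.ofReal_re, Complex.ofReal_im,
          Complex.zero_im, zero_mul, add_zero, zero_add] at him
        have hb : b = 0 := by
          rcases mul_eq_zero.1 him with h' | h'
          · exact h'
          · exact absurd h' (ne_of_gt hz)
        subst hb
        have hre := congrArg Complex.re hab
        simp at hre
        exact ⟨hre, rfl⟩
      have hbase_ne : ∃ i, i < r ∧ (Polynomial.aeval z) (St7.Fp htl r 0 i) ≠ 0 := by
        by_contra hall
        push_neg at hall
        apply htl0
        refine Polynomial.ext fun m => ?_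
        rw [Polynomial.coeff_zero]
        rcases le_or_gt m d with hmd | hmd
        · have hall0 := hall 0 (by omega)
          rw [hvz0] at hall0
          obtain ⟨hA, hB⟩ := pair_zero _ _ hall0
          rcases lt_or_ge m r with hmr | hmr
          · rcases Nat.eq_zero_or_pos m with rfl | hm1
            · exact hA
            · have hk := hall (r - m) (by omega)
              rw [hvzk (r - m) (by omega) (by omega)] at hk
              have hpair := (mul_eq_zero.1 hk).resolve_left hzne
              obtain ⟨h1', h2'⟩ := pair_zero _ _ hpair
              rw [show r - (r - m) = m by omega] at h1'
              exact h1'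
          · rcases Nat.eq_or_lt_of_le hmr with rfl | hmr'
            · exact hB
            · have hk := hall (2 * r - m) (by omega)
              rw [hvzk (2 * r - m) (by omega) (by omega)] at hk
              have hpair := (mul_eq_zero.1 hk).resolve_left hzne
              obtain ⟨h1', h2'⟩ := pair_zero _ _ hpair
              rw [show 2 * r - (2 * r - m) = m by omega] at h2'
              exact h2'
        · exact St7.htilde_coeff_zero_of_gt d h hmd
      -- the chain invariant at every level
      have hchain : ∀ m : ℕ,
          (∃ θ : ℕ → ℝ, (∀ i j, i ≤ j → j < r → θ i ≤ θ j) ∧ θ (r-1) ≤ θ 0 + z.arg ∧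
            (∀ k, k < r → ∃ ρ : ℝ, 0 ≤ ρ ∧
              (Polynomial.aeval z) (St7.Fp htl r m k) = (ρ : ℂ) * Complex.exp ((θ k : ℂ) * Complex.I)))
          ∧ (∃ i, i < r ∧ (Polynomial.aeval z) (St7.Fp htl r m i) ≠ 0) := by
        intro m
        induction m with
        | zero =>
          refine ⟨?_, hbase_ne⟩
          exact St7.base_chain z hz r hr1 htl hcf
            (fun u v huv => St7.htilde_cross d r h hnn hr huv)
            (fun k => (Polynomial.aeval z) (St7.Fp htl r 0 k)) hvz0 hvzk
        | succ m ih =>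
          obtain ⟨⟨θ, hmono, hwin, hrep⟩, hex⟩ := ih
          obtain ⟨θ', hmono', hwin', hrep', hne'⟩ :=
            St7.chain_step z hz r hr1 (fun i => (Polynomial.aeval z) (St7.Fp htl r m i)) θ
              hmono hwin hrep
          refine ⟨⟨θ', hmono', hwin', fun k hk => ?_⟩, ⟨0, by omega, ?_⟩⟩
          · obtain ⟨ρ, hρ, hTk⟩ := hrep' k hk
            exact ⟨ρ, hρ, by rw [hevrec m k]; exact hTk⟩
          · rw [hevrec m 0]
            exact hne' hex 0 (by omega)
      -- conclude
      intro hzero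
      rcases Nat.eq_zero_or_pos d with hd0 | hd0
      · -- d = 0
        subst hd0
        rw [hptF, hvz0] at hzero
        have hcr : htl.coeff r = 0 := Polynomial.coeff_eq_zero_of_natDegree_lt (by omega)
        rw [hcr] at hzero
        push_cast at hzero
        simp only [mul_zero, add_zero, zero_mul] at hzero
        have hc0 : htl.coeff 0 = 0 := by exact_mod_cast hzero
        apply htl0
        refine Polynomial.ext fun m => ?_
        rcases Nat.eq_zero_or_pos m with rfl | hm
        · simpa using hc0
        · simpa using St7.htilde_coeff_zero_of_gt 0 h (by omega : (0:ℕ) < m)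
      · -- d ≥ 1
        have hm := hchain (d - 1)
        obtain ⟨⟨θ, hmono, hwin, hrep⟩, hex⟩ := hm
        obtain ⟨θ', _, _, _, hne'⟩ :=
          St7.chain_step z hz r hr1 (fun i => (Polynomial.aeval z) (St7.Fp htl r (d-1) i)) θ
            hmono hwin hrep
        have := hne' hex 0 (by omega)
        rw [← hevrec (d-1) 0, show d - 1 + 1 = d by omega, ← hptF] at this
        exact this hzero
    -- wrap up: roots are real
    intro z0 hroot
    by_contra him
    rcases lt_or_gt_of_ne him with hneg | hpos
    · have hconj : (Polynomial.aeval ((starRingEnd ℂ) z0)) pt = 0 := by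
        rw [Polynomial.aeval_conj, hroot, map_zero]
      exact key _ (by simpa [Complex.conj_im] using by linarith : 0 < ((starRingEnd ℂ) z0).im) hconj
    · exact key z0 hpos hroot
end
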